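/- arXiv:2402.06670 — 4 statements merged into one kernel-verified Lean document; each statement's English description precedes it below -/
import Mathlib

section
/- For real numbers l, a, b with 0 < l ≤ b ≤ a, one has S³ᴰ(l,a,b) = 2lb + 2la − (π/4)·l²; equivalently, the 3D needle intersection probability P³ᴰ(l,a,b) = S³ᴰ(l,a,b)/(a·b·π²/2) equals (4/π²)·(l/a + l/b) − (1/(2π))·l²/(ab). -/
open Real MeasureTheory Filter

/-- `A(l,a) = ∫_0^π min(a, l·|cos φ|) dφ` -/
noncomputable def A2 (l a : ℝ) : ℝ := ∫ φ in (0:ℝ)..π, min a (l * |Real.cos φ|)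

/-- `B(l,b) = ∫_0^π min(b, l·sin φ) dφ` -/
noncomputable def B2 (l b : ℝ) : ℝ := ∫ φ in (0:ℝ)..π, min b (l * Real.sin φ)

/-- `AB(l,a,b) = ∫_0^π min(a, l·|cos φ|)·min(b, l·sin φ) dφ` -/
noncomputable def AB2 (l a b : ℝ) : ℝ :=
  ∫ φ in (0:ℝ)..π, min a (l * |Real.cos φ|) * min b (l * Real.sin φ)

/-- Intersection probability for the 2D Buffon–Laplace needle problem. -/
noncomputable def P2 (l a b : ℝ) : ℝ :=
  (b * A2 l a + a * B2 l b - AB2 l a b) / (π * a * b)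

/-- Intersection probability for the 2D spherocylinder Buffon–Laplace problem. -/
noncomputable def P2sc (l σ a b : ℝ) : ℝ :=
  ((b - σ) * A2 l (a - σ) + (a - σ) * B2 l (b - σ) - AB2 l (a - σ) (b - σ)
    + (σ * a + σ * b - σ ^ 2) * π) / (π * a * b)

/-- `A³ᴰ(l,a) = ∫_0^{π/2} ∫_0^π min(a, l·sin ψ·|cos φ|) dφ dψ` -/
noncomputable def A3 (l a : ℝ) : ℝ :=
  ∫ ψ in (0:ℝ)..(π/2), ∫ φ in (0:ℝ)..π, min a (l * Real.sin ψ * |Real.cos φ|)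

/-- `B³ᴰ(l,b) = ∫_0^{π/2} ∫_0^π min(b, l·sin ψ·sin φ) dφ dψ` -/
noncomputable def B3 (l b : ℝ) : ℝ :=
  ∫ ψ in (0:ℝ)..(π/2), ∫ φ in (0:ℝ)..π, min b (l * Real.sin ψ * Real.sin φ)

/-- `AB³ᴰ(l,a,b) = ∫_0^{π/2} ∫_0^π min(a, l·sin ψ·|cos φ|)·min(b, l·sin ψ·sin φ) dφ dψ` -/
noncomputable def AB3 (l a b : ℝ) : ℝ :=
  ∫ ψ in (0:ℝ)..(π/2), ∫ φ in (0:ℝ)..π,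
    min a (l * Real.sin ψ * |Real.cos φ|) * min b (l * Real.sin ψ * Real.sin φ)

/-- `S³ᴰ(l,a,b) = b·A³ᴰ(l,a) + a·B³ᴰ(l,b) − AB³ᴰ(l,a,b)` -/
noncomputable def S3 (l a b : ℝ) : ℝ := b * A3 l a + a * B3 l b - AB3 l a b

/-- `F(α,β,t) = ∫_α^β √(sin²ψ − t²) dψ` -/
noncomputable def Faux (α β t : ℝ) : ℝ :=
  ∫ ψ in α..β, Real.sqrt (Real.sin ψ ^ 2 - t ^ 2)

/-- `G(α,β,t) = ∫_α^β (π/2 − arcsin(t / sin ψ)) dψ` -/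
noncomputable def Gaux (α β t : ℝ) : ℝ :=
  ∫ ψ in α..β, (π / 2 - Real.arcsin (t / Real.sin ψ))


lemma abs_cos_int : ∫ φ in (0:ℝ)..π, |Real.cos φ| = 2 := by
  have h1 : (∫ φ in (0:ℝ)..(π/2), |Real.cos φ|) = 1 := by
    rw [intervalIntegral.integral_congr (g := Real.cos)]
    · simp [integral_cos]
    · intro x hx
      rw [Set.uIcc_of_le (by positivity : (0:ℝ) ≤ π/2)] at hx
      exact abs_of_nonneg (Real.cos_nonneg_of_mem_Icc
        ⟨by linarith [hx.1, Real.pi_pos], hx.2⟩)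
  have h2 : (∫ φ in (π/2:ℝ)..π, |Real.cos φ|) = 1 := by
    rw [intervalIntegral.integral_congr (g := fun x => -Real.cos x)]
    · simp [integral_cos]
    · intro x hx
      rw [Set.uIcc_of_le (by linarith [Real.pi_pos] : (π/2:ℝ) ≤ π)] at hx
      exact abs_of_nonpos (Real.cos_nonpos_of_pi_div_two_le_of_le hx.1
        (by linarith [Real.pi_pos, hx.2]))
  have key := intervalIntegral.integral_add_adjacent_intervals
    (μ := volume) (a := (0:ℝ)) (b := π/2) (c := π) (f := fun x => |Real.cos x|)
    (Real.continuous_cos.abs.intervalIntegrable _ _)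
    (Real.continuous_cos.abs.intervalIntegrable _ _)
  rw [← key, h1, h2]; norm_num

lemma abs_cos_sin_int : ∫ φ in (0:ℝ)..π, |Real.cos φ| * Real.sin φ = 1 := by
  have key : ∀ u v : ℝ, (∫ x in u..v, Real.cos x * Real.sin x)
      = Real.sin v ^ 2 / 2 - Real.sin u ^ 2 / 2 := by
    intro u v
    have : ∀ x ∈ Set.uIcc u v, HasDerivAt (fun y => Real.sin y ^ 2 / 2)
        (Real.cos x * Real.sin x) x := by
      intro x _
      have := (Real.hasDerivAt_sin x).pow 2
      simpa [mul_comm, mul_assoc, mul_left_comm] using this.div_const 2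
    exact intervalIntegral.integral_eq_sub_of_hasDerivAt this
      ((Real.continuous_cos.mul Real.continuous_sin).intervalIntegrable _ _)
  have h1 : (∫ φ in (0:ℝ)..(π/2), |Real.cos φ| * Real.sin φ) = 1/2 := by
    rw [intervalIntegral.integral_congr (g := fun x => Real.cos x * Real.sin x)]
    · rw [key]; simp
    · intro x hx
      rw [Set.uIcc_of_le (by positivity : (0:ℝ) ≤ π/2)] at hx
      show |Real.cos x| * Real.sin x = Real.cos x * Real.sin x
      rw [abs_of_nonneg (Real.cos_nonneg_of_mem_Icc
        ⟨by linarith [hx.1, Real.pi_pos], hx.2⟩)]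
  have h2 : (∫ φ in (π/2:ℝ)..π, |Real.cos φ| * Real.sin φ) = 1/2 := by
    rw [intervalIntegral.integral_congr (g := fun x => -(Real.cos x * Real.sin x))]
    · rw [intervalIntegral.integral_neg, key]; simp
    · intro x hx
      rw [Set.uIcc_of_le (by linarith [Real.pi_pos] : (π/2:ℝ) ≤ π)] at hx
      show |Real.cos x| * Real.sin x = -(Real.cos x * Real.sin x)
      rw [abs_of_nonpos (Real.cos_nonpos_of_pi_div_two_le_of_le hx.1
        (by linarith [Real.pi_pos, hx.2]))]
      ring
  have key2 := intervalIntegral.integral_add_adjacent_intervals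
    (μ := volume) (a := (0:ℝ)) (b := π/2) (c := π) (f := fun x => |Real.cos x| * Real.sin x)
    ((Real.continuous_cos.abs.mul Real.continuous_sin).intervalIntegrable _ _)
    ((Real.continuous_cos.abs.mul Real.continuous_sin).intervalIntegrable _ _)
  rw [← key2, h1, h2]; norm_num

theorem stmt15 (l a b : ℝ) (hl : 0 < l) (hlb : l ≤ b) (hba : b ≤ a) :
    S3 l a b = 2 * l * b + 2 * l * a - π / 4 * l ^ 2
      ∧ S3 l a b / (a * b * π ^ 2 / 2)
        = 4 / π ^ 2 * (l / a + l / b) - 1 / (2 * π) * (l ^ 2 / (a * b)) := by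
  have hpi := Real.pi_pos
  have hb : 0 < b := lt_of_lt_of_le hl hlb
  have ha : 0 < a := lt_of_lt_of_le hb hba
  -- bounds for ψ ∈ [0, π/2]
  have hsin : ∀ ψ : ℝ, ψ ∈ Set.uIcc (0:ℝ) (π/2) →
      0 ≤ Real.sin ψ ∧ Real.sin ψ ≤ 1 := by
    intro ψ hψ
    rw [Set.uIcc_of_le (by positivity)] at hψ
    exact ⟨Real.sin_nonneg_of_nonneg_of_le_pi hψ.1 (by linarith [hψ.2]),
      Real.sin_le_one ψ⟩
  have hminA : ∀ ψ : ℝ, 0 ≤ Real.sin ψ → Real.sin ψ ≤ 1 → ∀ φ : ℝ,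
      min a (l * Real.sin ψ * |Real.cos φ|) = l * Real.sin ψ * |Real.cos φ| := by
    intro ψ h0 h1 φ
    apply min_eq_right
    calc l * Real.sin ψ * |Real.cos φ| ≤ l * Real.sin ψ :=
          mul_le_of_le_one_right (mul_nonneg hl.le h0) (abs_cos_le_one φ)
      _ ≤ l * 1 := mul_le_mul_of_nonneg_left h1 hl.le
      _ = l := mul_one l
      _ ≤ a := le_trans hlb hba
  have hminB : ∀ ψ : ℝ, 0 ≤ Real.sin ψ → Real.sin ψ ≤ 1 → ∀ φ : ℝ,
      φ ∈ Set.uIcc (0:ℝ) π →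
      min b (l * Real.sin ψ * Real.sin φ) = l * Real.sin ψ * Real.sin φ := by
    intro ψ h0 h1 φ hφ
    rw [Set.uIcc_of_le (le_of_lt hpi)] at hφ
    apply min_eq_right
    calc l * Real.sin ψ * Real.sin φ ≤ l * Real.sin ψ :=
          mul_le_of_le_one_right (mul_nonneg hl.le h0) (Real.sin_le_one φ)
      _ ≤ l * 1 := mul_le_mul_of_nonneg_left h1 hl.le
      _ = l := mul_one l
      _ ≤ b := hlb
  have hA : A3 l a = 2 * l := by
    unfold A3
    rw [intervalIntegral.integral_congr (g := fun ψ => 2 * (l * Real.sin ψ))]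
    · rw [intervalIntegral.integral_const_mul, intervalIntegral.integral_const_mul,
        integral_sin]
      norm_num
    · intro ψ hψ
      obtain ⟨h0, h1⟩ := hsin ψ hψ
      show (∫ φ in (0:ℝ)..π, min a (l * Real.sin ψ * |Real.cos φ|))
        = 2 * (l * Real.sin ψ)
      rw [intervalIntegral.integral_congr
          (g := fun φ => (l * Real.sin ψ) * |Real.cos φ|)
          (fun φ _ => hminA ψ h0 h1 φ),
        intervalIntegral.integral_const_mul, abs_cos_int]
      ring
  have hB : B3 l b = 2 * l := by
    unfold B3
    rw [intervalIntegral.integral_congr (g := fun ψ => 2 * (l * Real.sin ψ))]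
    · rw [intervalIntegral.integral_const_mul, intervalIntegral.integral_const_mul,
        integral_sin]
      norm_num
    · intro ψ hψ
      obtain ⟨h0, h1⟩ := hsin ψ hψ
      show (∫ φ in (0:ℝ)..π, min b (l * Real.sin ψ * Real.sin φ))
        = 2 * (l * Real.sin ψ)
      rw [intervalIntegral.integral_congr
          (g := fun φ => (l * Real.sin ψ) * Real.sin φ)
          (fun φ hφ => hminB ψ h0 h1 φ hφ),
        intervalIntegral.integral_const_mul, integral_sin]
      simp; ring
  have hAB : AB3 l a b = π / 4 * l ^ 2 := by
    unfold AB3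
    rw [intervalIntegral.integral_congr
        (g := fun ψ => l ^ 2 * Real.sin ψ ^ 2)]
    · rw [intervalIntegral.integral_const_mul, integral_sin_sq]
      simp
      ring
    · intro ψ hψ
      obtain ⟨h0, h1⟩ := hsin ψ hψ
      show (∫ φ in (0:ℝ)..π, min a (l * Real.sin ψ * |Real.cos φ|)
          * min b (l * Real.sin ψ * Real.sin φ)) = l ^ 2 * Real.sin ψ ^ 2
      rw [intervalIntegral.integral_congr
          (g := fun φ => (l ^ 2 * Real.sin ψ ^ 2) * (|Real.cos φ| * Real.sin φ))]
      · rw [intervalIntegral.integral_const_mul, abs_cos_sin_int]; ring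
      · intro φ hφ
        show min a (l * Real.sin ψ * |Real.cos φ|)
            * min b (l * Real.sin ψ * Real.sin φ)
            = (l ^ 2 * Real.sin ψ ^ 2) * (|Real.cos φ| * Real.sin φ)
        rw [hminA ψ h0 h1 φ, hminB ψ h0 h1 φ hφ]; ring
  have hS : S3 l a b = 2 * l * b + 2 * l * a - π / 4 * l ^ 2 := by
    unfold S3; rw [hA, hB, hAB]; ring
  refine ⟨hS, ?_⟩
  rw [hS]
  field_simp
  ring
end

section
/- For real numbers l, a, b with 0 < b < l ≤ a, one has S³ᴰ(l,a,b) = 2lb + [2la − 2la·F(arcsin(b/l), π/2, b/l) + 2ab·G(arcsin(b/l), π/2, b/l)] − [(l²/2)·arcsin(b/l) + (3/2)·lb·√(1 − b²/l²) − b²·(π/2 − arcsin(b/l))]. -/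
open Real MeasureTheory Filter

section BuffonHelpers
open Real MeasureTheory intervalIntegral

lemma sinmono {x y : ℝ} (hx : 0 ≤ x) (hy : y ≤ π/2) (hxy : x ≤ y) :
    Real.sin x ≤ Real.sin y :=
  Real.sin_le_sin_of_le_of_le_pi_div_two (by linarith [Real.pi_pos]) hy hxy

lemma sin_ge_mid {c φ : ℝ} (hc0 : 0 ≤ c) (h1 : c ≤ φ) (h2 : φ ≤ π - c) :
    Real.sin c ≤ Real.sin φ := by
  rcases le_total φ (π/2) with h | h
  · exact sinmono hc0 h h1
  · rw [← Real.sin_pi_sub φ]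
    exact sinmono hc0 (by linarith) (by linarith)

lemma sin_le_high {c φ : ℝ} (hc0 : 0 ≤ c) (hc2 : c ≤ π/2) (h1 : π - c ≤ φ) (h2 : φ ≤ π) :
    Real.sin φ ≤ Real.sin c := by
  rw [← Real.sin_pi_sub φ]
  exact sinmono (by linarith) hc2 (by linarith)

lemma innerA (s a : ℝ) (hs : 0 ≤ s) (hsa : s ≤ a) :
    ∫ φ in (0:ℝ)..π, min a (s * |Real.cos φ|) = 2 * s := by
  have key : ∀ u v : ℝ, IntervalIntegrable (fun φ => min a (s * |Real.cos φ|)) volume u v :=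
    fun u v => (continuous_const.min (continuous_const.mul Real.continuous_cos.abs)).intervalIntegrable u v
  have hsplit := intervalIntegral.integral_add_adjacent_intervals (key 0 (π/2)) (key (π/2) π)
  rw [← hsplit]
  have e1 : ∫ φ in (0:ℝ)..(π/2), min a (s * |Real.cos φ|) = ∫ φ in (0:ℝ)..(π/2), s * Real.cos φ := by
    apply intervalIntegral.integral_congr
    intro φ hφ
    rw [Set.uIcc_of_le (by positivity)] at hφ
    have hcos : 0 ≤ Real.cos φ := Real.cos_nonneg_of_mem_Icc ⟨by linarith [hφ.1, Real.pi_pos], hφ.2⟩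
    show min a (s * |Real.cos φ|) = s * Real.cos φ
    rw [abs_of_nonneg hcos]
    exact min_eq_right (le_trans (by nlinarith [Real.cos_le_one φ]) hsa)
  have e2 : ∫ φ in (π/2:ℝ)..π, min a (s * |Real.cos φ|) = ∫ φ in (π/2:ℝ)..π, s * -Real.cos φ := by
    apply intervalIntegral.integral_congr
    intro φ hφ
    rw [Set.uIcc_of_le (by linarith [Real.pi_pos])] at hφ
    have hcos : Real.cos φ ≤ 0 := Real.cos_nonpos_of_pi_div_two_le_of_le hφ.1 (by linarith [hφ.2, Real.pi_pos])
    show min a (s * |Real.cos φ|) = s * -Real.cos φ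
    rw [abs_of_nonpos hcos]
    exact min_eq_right (le_trans (by nlinarith [Real.neg_one_le_cos φ]) hsa)
  rw [e1, e2]
  rw [intervalIntegral.integral_const_mul, intervalIntegral.integral_const_mul,
    integral_cos, intervalIntegral.integral_neg, integral_cos]
  simp [Real.sin_pi_div_two]
  ring

lemma innerB_le (s b : ℝ) (hs : 0 ≤ s) (hsb : s ≤ b) :
    ∫ φ in (0:ℝ)..π, min b (s * Real.sin φ) = 2 * s := by
  have e : ∫ φ in (0:ℝ)..π, min b (s * Real.sin φ) = ∫ φ in (0:ℝ)..π, s * Real.sin φ := by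
    apply intervalIntegral.integral_congr
    intro φ hφ
    rw [Set.uIcc_of_le Real.pi_pos.le] at hφ
    have h1 : Real.sin φ ≤ 1 := Real.sin_le_one φ
    show min b (s * Real.sin φ) = s * Real.sin φ
    exact min_eq_right (le_trans (by nlinarith) hsb)
  rw [e, intervalIntegral.integral_const_mul, integral_sin]
  simp; ring

lemma innerB_ge (s b : ℝ) (hb : 0 < b) (hbs : b ≤ s) :
    ∫ φ in (0:ℝ)..π, min b (s * Real.sin φ)
      = 2 * s - 2 * Real.sqrt (s ^ 2 - b ^ 2) + 2 * b * (π / 2 - Real.arcsin (b / s)) := by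
  have hs : 0 < s := lt_of_lt_of_le hb hbs
  have hbs1 : b / s ≤ 1 := (div_le_one hs).2 hbs
  have hbs0 : 0 ≤ b / s := by positivity
  set c := Real.arcsin (b / s) with hc
  have hc0 : 0 ≤ c := Real.arcsin_nonneg.2 hbs0
  have hc2 : c ≤ π / 2 := Real.arcsin_le_pi_div_two _
  have hsinc : Real.sin c = b / s := Real.sin_arcsin (by linarith) hbs1
  have key : ∀ u v : ℝ, IntervalIntegrable (fun φ => min b (s * Real.sin φ)) volume u v :=
    fun u v => (continuous_const.min (continuous_const.mul Real.continuous_sin)).intervalIntegrable u v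
  have hsplit1 := intervalIntegral.integral_add_adjacent_intervals (key c (π - c)) (key (π - c) π)
  have hsplit2 := intervalIntegral.integral_add_adjacent_intervals (key 0 c)
    ((key c (π - c)).trans (key (π - c) π))
  rw [← hsplit1] at hsplit2
  rw [← hsplit2]
  have e1 : ∫ φ in (0:ℝ)..c, min b (s * Real.sin φ) = s * (1 - Real.cos c) := by
    rw [intervalIntegral.integral_congr (g := fun φ => s * Real.sin φ) ?_]
    · rw [intervalIntegral.integral_const_mul, integral_sin]; simp
    · intro φ hφ
      rw [Set.uIcc_of_le hc0] at hφ
      have hle : Real.sin φ ≤ b / s := hsinc ▸ sinmono hφ.1 hc2 hφ.2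
      show min b (s * Real.sin φ) = s * Real.sin φ
      exact min_eq_right (by calc s * Real.sin φ ≤ s * (b / s) := by nlinarith
                                _ = b := by field_simp)
  have e2 : ∫ φ in c..(π - c), min b (s * Real.sin φ) = b * (π - 2 * c) := by
    rw [intervalIntegral.integral_congr (g := fun _ => b) ?_]
    · rw [intervalIntegral.integral_const]; ring_nf
    · intro φ hφ
      rw [Set.uIcc_of_le (by linarith)] at hφ
      have hge : b / s ≤ Real.sin φ := hsinc ▸ sin_ge_mid hc0 hφ.1 hφ.2
      show min b (s * Real.sin φ) = b
      exact min_eq_left (by calc b = s * (b / s) := by field_simp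
                                _ ≤ s * Real.sin φ := by nlinarith)
  have e3 : ∫ φ in (π - c)..π, min b (s * Real.sin φ) = s * (1 - Real.cos c) := by
    rw [intervalIntegral.integral_congr (g := fun φ => s * Real.sin φ) ?_]
    · rw [intervalIntegral.integral_const_mul, integral_sin]
      rw [Real.cos_pi_sub, Real.cos_pi]; ring
    · intro φ hφ
      rw [Set.uIcc_of_le (by linarith)] at hφ
      have hle : Real.sin φ ≤ b / s := hsinc ▸ sin_le_high hc0 hc2 hφ.1 hφ.2
      show min b (s * Real.sin φ) = s * Real.sin φ
      exact min_eq_right (by calc s * Real.sin φ ≤ s * (b / s) := by nlinarith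
                                _ = b := by field_simp)
  rw [e1, e2, e3]
  have hscos : s * Real.cos c = Real.sqrt (s ^ 2 - b ^ 2) := by
    rw [hc, Real.cos_arcsin]
    rw [show (s ^ 2 - b ^ 2) = s ^ 2 * (1 - (b / s) ^ 2) by field_simp]
    rw [Real.sqrt_mul (sq_nonneg s), Real.sqrt_sq hs.le]
  nlinarith [hscos]

lemma innerAB_le (s a b : ℝ) (hs : 0 ≤ s) (hsa : s ≤ a) (hsb : s ≤ b) :
    ∫ φ in (0:ℝ)..π, min a (s * |Real.cos φ|) * min b (s * Real.sin φ) = s ^ 2 := by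
  have key : ∀ u v : ℝ, IntervalIntegrable
      (fun φ => min a (s * |Real.cos φ|) * min b (s * Real.sin φ)) volume u v :=
    fun u v => ((continuous_const.min (continuous_const.mul Real.continuous_cos.abs)).mul
      (continuous_const.min (continuous_const.mul Real.continuous_sin))).intervalIntegrable u v
  rw [← intervalIntegral.integral_add_adjacent_intervals (key 0 (π/2)) (key (π/2) π)]
  have e1 : ∫ φ in (0:ℝ)..(π/2), min a (s * |Real.cos φ|) * min b (s * Real.sin φ)
      = ∫ φ in (0:ℝ)..(π/2), s ^ 2 * (Real.sin φ * Real.cos φ) := by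
    apply intervalIntegral.integral_congr
    intro φ hφ
    rw [Set.uIcc_of_le (by positivity)] at hφ
    have h0 : 0 ≤ φ := hφ.1
    have hcos : 0 ≤ Real.cos φ := Real.cos_nonneg_of_mem_Icc ⟨by linarith [Real.pi_pos], hφ.2⟩
    show min a (s * |Real.cos φ|) * min b (s * Real.sin φ) = s ^ 2 * (Real.sin φ * Real.cos φ)
    rw [abs_of_nonneg hcos,
      min_eq_right (le_trans (by nlinarith [Real.cos_le_one φ]) hsa),
      min_eq_right (le_trans (by nlinarith [Real.sin_le_one φ]) hsb)]
    ring
  have e2 : ∫ φ in (π/2:ℝ)..π, min a (s * |Real.cos φ|) * min b (s * Real.sin φ)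
      = ∫ φ in (π/2:ℝ)..π, -(s ^ 2 * (Real.sin φ * Real.cos φ)) := by
    apply intervalIntegral.integral_congr
    intro φ hφ
    rw [Set.uIcc_of_le (by linarith [Real.pi_pos])] at hφ
    have hcos : Real.cos φ ≤ 0 := Real.cos_nonpos_of_pi_div_two_le_of_le hφ.1 (by linarith [hφ.2, Real.pi_pos])
    have hsin : 0 ≤ Real.sin φ := Real.sin_nonneg_of_nonneg_of_le_pi (by linarith [hφ.1, Real.pi_pos]) hφ.2
    show min a (s * |Real.cos φ|) * min b (s * Real.sin φ) = -(s ^ 2 * (Real.sin φ * Real.cos φ))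
    rw [abs_of_nonpos hcos,
      min_eq_right (le_trans (by nlinarith [Real.neg_one_le_cos φ]) hsa),
      min_eq_right (le_trans (by nlinarith [Real.sin_le_one φ]) hsb)]
    ring
  rw [e1, e2, intervalIntegral.integral_const_mul, intervalIntegral.integral_neg,
    intervalIntegral.integral_const_mul, integral_sin_mul_cos₁, integral_sin_mul_cos₁]
  simp [Real.sin_pi_div_two]
  ring

set_option maxHeartbeats 1000000 in
lemma innerAB_ge (s a b : ℝ) (hb : 0 < b) (hbs : b ≤ s) (hsa : s ≤ a) :
    ∫ φ in (0:ℝ)..π, min a (s * |Real.cos φ|) * min b (s * Real.sin φ)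
      = 2 * b * s - b ^ 2 := by
  have hs : 0 < s := lt_of_lt_of_le hb hbs
  have hbs1 : b / s ≤ 1 := (div_le_one hs).2 hbs
  have hbs0 : 0 ≤ b / s := by positivity
  set c := Real.arcsin (b / s) with hc
  have hc0 : 0 ≤ c := Real.arcsin_nonneg.2 hbs0
  have hc2 : c ≤ π / 2 := Real.arcsin_le_pi_div_two _
  have hsinc : Real.sin c = b / s := Real.sin_arcsin (by linarith) hbs1
  have key : ∀ u v : ℝ, IntervalIntegrable
      (fun φ => min a (s * |Real.cos φ|) * min b (s * Real.sin φ)) volume u v :=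
    fun u v => ((continuous_const.min (continuous_const.mul Real.continuous_cos.abs)).mul
      (continuous_const.min (continuous_const.mul Real.continuous_sin))).intervalIntegrable u v
  have hsplit3 := intervalIntegral.integral_add_adjacent_intervals (key (π/2) (π - c)) (key (π - c) π)
  have hsplit2 := intervalIntegral.integral_add_adjacent_intervals (key c (π/2))
    ((key (π/2) (π - c)).trans (key (π - c) π))
  have hsplit1 := intervalIntegral.integral_add_adjacent_intervals (key 0 c)
    ((key c (π/2)).trans ((key (π/2) (π - c)).trans (key (π - c) π)))
  rw [← hsplit3] at hsplit2
  rw [← hsplit2] at hsplit1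
  rw [← hsplit1]
  have e1 : ∫ φ in (0:ℝ)..c, min a (s * |Real.cos φ|) * min b (s * Real.sin φ)
      = b ^ 2 / 2 := by
    rw [intervalIntegral.integral_congr (g := fun φ => s ^ 2 * (Real.sin φ * Real.cos φ)) ?_]
    · rw [intervalIntegral.integral_const_mul, integral_sin_mul_cos₁, hsinc]
      rw [Real.sin_zero]
      field_simp
      ring
    · intro φ hφ
      rw [Set.uIcc_of_le hc0] at hφ
      have h0 : 0 ≤ φ := hφ.1
      have hφ2 : φ ≤ π / 2 := le_trans hφ.2 hc2
      have hcos : 0 ≤ Real.cos φ := Real.cos_nonneg_of_mem_Icc ⟨by linarith [Real.pi_pos], hφ2⟩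
      have hle : Real.sin φ ≤ b / s := hsinc ▸ sinmono h0 hc2 hφ.2
      show min a (s * |Real.cos φ|) * min b (s * Real.sin φ) = s ^ 2 * (Real.sin φ * Real.cos φ)
      rw [abs_of_nonneg hcos,
        min_eq_right (le_trans (by nlinarith [Real.cos_le_one φ]) hsa),
        min_eq_right (by calc s * Real.sin φ ≤ s * (b / s) := by nlinarith
                           _ = b := by field_simp)]
      ring
  have e2 : ∫ φ in c..(π/2:ℝ), min a (s * |Real.cos φ|) * min b (s * Real.sin φ)
      = b * s - b ^ 2 := by
    rw [intervalIntegral.integral_congr (g := fun φ => (s * b) * Real.cos φ) ?_]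
    · rw [intervalIntegral.integral_const_mul, integral_cos, Real.sin_pi_div_two, hsinc]
      field_simp
    · intro φ hφ
      rw [Set.uIcc_of_le hc2] at hφ
      have h0 : 0 ≤ φ := le_trans hc0 hφ.1
      have hcos : 0 ≤ Real.cos φ := Real.cos_nonneg_of_mem_Icc ⟨by linarith [Real.pi_pos], hφ.2⟩
      have hge : b / s ≤ Real.sin φ := hsinc ▸ sin_ge_mid hc0 hφ.1 (by linarith [hφ.2, Real.pi_pos])
      show min a (s * |Real.cos φ|) * min b (s * Real.sin φ) = (s * b) * Real.cos φ
      rw [abs_of_nonneg hcos,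
        min_eq_right (le_trans (by nlinarith [Real.cos_le_one φ]) hsa),
        min_eq_left (by calc b = s * (b / s) := by field_simp
                             _ ≤ s * Real.sin φ := by nlinarith)]
      ring
  have e3 : ∫ φ in (π/2:ℝ)..(π - c), min a (s * |Real.cos φ|) * min b (s * Real.sin φ)
      = b * s - b ^ 2 := by
    rw [intervalIntegral.integral_congr (g := fun φ => -((s * b) * Real.cos φ)) ?_]
    · rw [intervalIntegral.integral_neg, intervalIntegral.integral_const_mul, integral_cos,
        Real.sin_pi_div_two, Real.sin_pi_sub, hsinc]
      field_simp
      ring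
    · intro φ hφ
      rw [Set.uIcc_of_le (by linarith)] at hφ
      have hφπ : φ ≤ π := by linarith [hφ.2]
      have hcos : Real.cos φ ≤ 0 := Real.cos_nonpos_of_pi_div_two_le_of_le hφ.1 (by linarith [Real.pi_pos])
      have hge : b / s ≤ Real.sin φ := hsinc ▸ sin_ge_mid hc0 (by linarith [hφ.1]) hφ.2
      show min a (s * |Real.cos φ|) * min b (s * Real.sin φ) = -((s * b) * Real.cos φ)
      rw [abs_of_nonpos hcos,
        min_eq_right (le_trans (by nlinarith [Real.neg_one_le_cos φ]) hsa),
        min_eq_left (by calc b = s * (b / s) := by field_simp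
                             _ ≤ s * Real.sin φ := by nlinarith)]
      ring
  have e4 : ∫ φ in (π - c)..π, min a (s * |Real.cos φ|) * min b (s * Real.sin φ)
      = b ^ 2 / 2 := by
    rw [intervalIntegral.integral_congr (g := fun φ => -(s ^ 2 * (Real.sin φ * Real.cos φ))) ?_]
    · rw [intervalIntegral.integral_neg, intervalIntegral.integral_const_mul,
        integral_sin_mul_cos₁, Real.sin_pi, Real.sin_pi_sub, hsinc]
      field_simp
      ring
    · intro φ hφ
      rw [Set.uIcc_of_le (by linarith)] at hφ
      have hcos : Real.cos φ ≤ 0 := Real.cos_nonpos_of_pi_div_two_le_of_le (by linarith [hφ.1]) (by linarith [hφ.2, Real.pi_pos])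
      have hsin : 0 ≤ Real.sin φ := Real.sin_nonneg_of_nonneg_of_le_pi (by linarith [hφ.1, Real.pi_pos]) hφ.2
      have hle : Real.sin φ ≤ b / s := hsinc ▸ sin_le_high hc0 hc2 hφ.1 hφ.2
      show min a (s * |Real.cos φ|) * min b (s * Real.sin φ) = -(s ^ 2 * (Real.sin φ * Real.cos φ))
      rw [abs_of_nonpos hcos,
        min_eq_right (le_trans (by nlinarith [Real.neg_one_le_cos φ]) hsa),
        min_eq_right (by calc s * Real.sin φ ≤ s * (b / s) := by nlinarith
                           _ = b := by field_simp)]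
      ring
  rw [e1, e2, e3, e4]
  ring


lemma A3_eq (l a : ℝ) (hl : 0 ≤ l) (hla : l ≤ a) : A3 l a = 2 * l := by
  unfold A3
  rw [intervalIntegral.integral_congr (g := fun ψ => 2 * (l * Real.sin ψ)) ?_]
  · rw [intervalIntegral.integral_const_mul, intervalIntegral.integral_const_mul, integral_sin]
    simp
  · intro ψ hψ
    rw [Set.uIcc_of_le (by positivity)] at hψ
    have hsin : 0 ≤ Real.sin ψ :=
      Real.sin_nonneg_of_nonneg_of_le_pi hψ.1 (by linarith [hψ.2, Real.pi_pos])
    show (∫ φ in (0:ℝ)..π, min a (l * Real.sin ψ * |Real.cos φ|)) = 2 * (l * Real.sin ψ)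
    exact innerA (l * Real.sin ψ) a (mul_nonneg hl hsin)
      (le_trans (by nlinarith [Real.sin_le_one ψ]) hla)

lemma B3_eq (l b : ℝ) (hb : 0 < b) (hbl : b < l) :
    B3 l b = 2 * l - 2 * l * Faux (Real.arcsin (b / l)) (π / 2) (b / l)
      + 2 * b * Gaux (Real.arcsin (b / l)) (π / 2) (b / l) := by
  have hl : 0 < l := hb.trans hbl
  set t := b / l with ht
  have ht0 : 0 < t := by positivity
  have ht1 : t < 1 := (div_lt_one hl).2 hbl
  have hlt : l * t = b := by rw [ht]; field_simp
  set ψ₀ := Real.arcsin t with hψ₀def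
  have hψ0 : 0 ≤ ψ₀ := Real.arcsin_nonneg.2 ht0.le
  have hψ2 : ψ₀ ≤ π / 2 := Real.arcsin_le_pi_div_two _
  have hsinψ₀ : Real.sin ψ₀ = t := Real.sin_arcsin (by linarith) ht1.le
  have step1 : B3 l b = ∫ ψ in (0:ℝ)..(π/2),
      (2 * (l * Real.sin ψ) - 2 * l * Real.sqrt (Real.sin ψ ^ 2 - t ^ 2)
        + 2 * b * (π / 2 - Real.arcsin (t / max (Real.sin ψ) t))) := by
    unfold B3
    apply intervalIntegral.integral_congr
    intro ψ hψ
    rw [Set.uIcc_of_le (by positivity)] at hψ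
    have hsin : 0 ≤ Real.sin ψ :=
      Real.sin_nonneg_of_nonneg_of_le_pi hψ.1 (by linarith [hψ.2, Real.pi_pos])
    show (∫ φ in (0:ℝ)..π, min b (l * Real.sin ψ * Real.sin φ))
        = 2 * (l * Real.sin ψ) - 2 * l * Real.sqrt (Real.sin ψ ^ 2 - t ^ 2)
        + 2 * b * (π / 2 - Real.arcsin (t / max (Real.sin ψ) t))
    rcases le_total (Real.sin ψ) t with hcase | hcase
    · rw [innerB_le (l * Real.sin ψ) b (mul_nonneg hl.le hsin) (by nlinarith)]
      have h1 : Real.sqrt (Real.sin ψ ^ 2 - t ^ 2) = 0 :=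
        Real.sqrt_eq_zero'.mpr (by nlinarith)
      have h2 : max (Real.sin ψ) t = t := max_eq_right hcase
      rw [h1, h2, div_self ht0.ne', Real.arcsin_one]
      ring
    · have hble : b ≤ l * Real.sin ψ := by rw [← hlt]; nlinarith
      rw [innerB_ge (l * Real.sin ψ) b hb hble]
      have h2 : max (Real.sin ψ) t = Real.sin ψ := max_eq_left hcase
      have h3 : b / (l * Real.sin ψ) = t / Real.sin ψ := by rw [ht, div_div]
      have h4 : Real.sqrt ((l * Real.sin ψ) ^ 2 - b ^ 2)
          = l * Real.sqrt (Real.sin ψ ^ 2 - t ^ 2) := by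
        rw [show (l * Real.sin ψ) ^ 2 - b ^ 2 = l ^ 2 * (Real.sin ψ ^ 2 - t ^ 2) by
            rw [← hlt]; ring,
          Real.sqrt_mul (sq_nonneg l), Real.sqrt_sq hl.le]
      rw [h2, h3, h4]
      ring
  have csqrt : Continuous fun ψ => Real.sqrt (Real.sin ψ ^ 2 - t ^ 2) :=
    Real.continuous_sqrt.comp (by continuity)
  have cmax : Continuous fun ψ => max (Real.sin ψ) t := Real.continuous_sin.max continuous_const
  have hmaxne : ∀ ψ : ℝ, max (Real.sin ψ) t ≠ 0 :=
    fun ψ => ne_of_gt (lt_of_lt_of_le ht0 (le_max_right _ _))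
  have carcs : Continuous fun ψ => π / 2 - Real.arcsin (t / max (Real.sin ψ) t) :=
    continuous_const.sub (Real.continuous_arcsin.comp (continuous_const.div cmax hmaxne))
  have i1 : IntervalIntegrable (fun ψ => 2 * (l * Real.sin ψ)) volume 0 (π/2) :=
    (continuous_const.mul (continuous_const.mul Real.continuous_sin)).intervalIntegrable _ _
  have i2 : IntervalIntegrable (fun ψ => 2 * l * Real.sqrt (Real.sin ψ ^ 2 - t ^ 2)) volume 0 (π/2) :=
    (continuous_const.mul csqrt).intervalIntegrable _ _
  have i3 : IntervalIntegrable
      (fun ψ => 2 * b * (π / 2 - Real.arcsin (t / max (Real.sin ψ) t))) volume 0 (π/2) :=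
    (continuous_const.mul carcs).intervalIntegrable _ _
  rw [step1, intervalIntegral.integral_add (i1.sub i2) i3, intervalIntegral.integral_sub i1 i2]
  have es : ∫ ψ in (0:ℝ)..(π/2), 2 * (l * Real.sin ψ) = 2 * l := by
    rw [intervalIntegral.integral_const_mul, intervalIntegral.integral_const_mul, integral_sin]
    simp
  have eF : ∫ ψ in (0:ℝ)..(π/2), 2 * l * Real.sqrt (Real.sin ψ ^ 2 - t ^ 2)
      = 2 * l * Faux ψ₀ (π/2) t := by
    rw [intervalIntegral.integral_const_mul]
    congr 1
    rw [← intervalIntegral.integral_add_adjacent_intervals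
      (csqrt.intervalIntegrable 0 ψ₀) (csqrt.intervalIntegrable ψ₀ (π/2))]
    have z1 : ∫ ψ in (0:ℝ)..ψ₀, Real.sqrt (Real.sin ψ ^ 2 - t ^ 2) = 0 := by
      rw [intervalIntegral.integral_congr (g := fun _ => (0:ℝ)) ?_]
      · simp
      · intro ψ hψ
        rw [Set.uIcc_of_le hψ0] at hψ
        have hsin : 0 ≤ Real.sin ψ :=
          Real.sin_nonneg_of_nonneg_of_le_pi hψ.1 (by linarith [hψ.2, Real.pi_pos])
        have hle : Real.sin ψ ≤ t := hsinψ₀ ▸ sinmono hψ.1 hψ2 hψ.2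
        show Real.sqrt (Real.sin ψ ^ 2 - t ^ 2) = 0
        exact Real.sqrt_eq_zero'.mpr (by nlinarith)
    rw [z1, zero_add]
    rfl
  have eG : ∫ ψ in (0:ℝ)..(π/2), 2 * b * (π / 2 - Real.arcsin (t / max (Real.sin ψ) t))
      = 2 * b * Gaux ψ₀ (π/2) t := by
    rw [intervalIntegral.integral_const_mul]
    congr 1
    rw [← intervalIntegral.integral_add_adjacent_intervals
      (carcs.intervalIntegrable 0 ψ₀) (carcs.intervalIntegrable ψ₀ (π/2))]
    have z1 : ∫ ψ in (0:ℝ)..ψ₀, (π / 2 - Real.arcsin (t / max (Real.sin ψ) t)) = 0 := by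
      rw [intervalIntegral.integral_congr (g := fun _ => (0:ℝ)) ?_]
      · simp
      · intro ψ hψ
        rw [Set.uIcc_of_le hψ0] at hψ
        have hle : Real.sin ψ ≤ t := hsinψ₀ ▸ sinmono hψ.1 hψ2 hψ.2
        show π / 2 - Real.arcsin (t / max (Real.sin ψ) t) = 0
        rw [max_eq_right hle, div_self ht0.ne', Real.arcsin_one]
        ring
    have z2 : ∫ ψ in ψ₀..(π/2), (π / 2 - Real.arcsin (t / max (Real.sin ψ) t))
        = Gaux ψ₀ (π/2) t := by
      rw [intervalIntegral.integral_congr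
        (g := fun ψ => π / 2 - Real.arcsin (t / Real.sin ψ)) ?_]
      · rfl
      · intro ψ hψ
        rw [Set.uIcc_of_le hψ2] at hψ
        have hge : t ≤ Real.sin ψ := hsinψ₀ ▸ sinmono hψ0 hψ.2 hψ.1
        show π / 2 - Real.arcsin (t / max (Real.sin ψ) t)
            = π / 2 - Real.arcsin (t / Real.sin ψ)
        rw [max_eq_left hge]
    rw [z1, z2, zero_add]
  rw [es, eF, eG]

lemma AB3_eq (l a b : ℝ) (hb : 0 < b) (hbl : b < l) (hla : l ≤ a) :
    AB3 l a b = l ^ 2 / 2 * Real.arcsin (b / l)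
      + 3 / 2 * (l * b) * Real.sqrt (1 - b ^ 2 / l ^ 2)
      - b ^ 2 * (π / 2 - Real.arcsin (b / l)) := by
  have hl : 0 < l := hb.trans hbl
  set t := b / l with ht
  have ht0 : 0 < t := by positivity
  have ht1 : t < 1 := (div_lt_one hl).2 hbl
  have hlt : l * t = b := by rw [ht]; field_simp
  set ψ₀ := Real.arcsin t with hψ₀def
  have hψ0 : 0 ≤ ψ₀ := Real.arcsin_nonneg.2 ht0.le
  have hψ2 : ψ₀ ≤ π / 2 := Real.arcsin_le_pi_div_two _
  have hsinψ₀ : Real.sin ψ₀ = t := Real.sin_arcsin (by linarith) ht1.le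
  have hcosψ₀ : Real.cos ψ₀ = Real.sqrt (1 - t ^ 2) := Real.cos_arcsin t
  have step1 : AB3 l a b = ∫ ψ in (0:ℝ)..(π/2),
      ((l * Real.sin ψ) ^ 2 - (max (l * Real.sin ψ - b) 0) ^ 2) := by
    unfold AB3
    apply intervalIntegral.integral_congr
    intro ψ hψ
    rw [Set.uIcc_of_le (by positivity)] at hψ
    have hsin : 0 ≤ Real.sin ψ :=
      Real.sin_nonneg_of_nonneg_of_le_pi hψ.1 (by linarith [hψ.2, Real.pi_pos])
    have hsa : l * Real.sin ψ ≤ a := le_trans (by nlinarith [Real.sin_le_one ψ]) hla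
    show (∫ φ in (0:ℝ)..π, min a (l * Real.sin ψ * |Real.cos φ|)
          * min b (l * Real.sin ψ * Real.sin φ))
        = (l * Real.sin ψ) ^ 2 - (max (l * Real.sin ψ - b) 0) ^ 2
    rcases le_total (Real.sin ψ) t with hcase | hcase
    · have hsb : l * Real.sin ψ ≤ b := by rw [← hlt]; nlinarith
      rw [innerAB_le (l * Real.sin ψ) a b (mul_nonneg hl.le hsin) hsa hsb,
        max_eq_right (by linarith)]
      ring
    · have hble : b ≤ l * Real.sin ψ := by rw [← hlt]; nlinarith
      rw [innerAB_ge (l * Real.sin ψ) a b hb hble hsa,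
        max_eq_left (by linarith)]
      ring
  have cg : Continuous fun ψ => (l * Real.sin ψ) ^ 2 - (max (l * Real.sin ψ - b) 0) ^ 2 := by
    continuity
  rw [step1, ← intervalIntegral.integral_add_adjacent_intervals
    (cg.intervalIntegrable 0 ψ₀) (cg.intervalIntegrable ψ₀ (π/2))]
  have p1 : ∫ ψ in (0:ℝ)..ψ₀, ((l * Real.sin ψ) ^ 2 - (max (l * Real.sin ψ - b) 0) ^ 2)
      = l ^ 2 * ((ψ₀ - Real.sin ψ₀ * Real.cos ψ₀) / 2) := by
    rw [intervalIntegral.integral_congr (g := fun ψ => l ^ 2 * Real.sin ψ ^ 2) ?_]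
    · rw [intervalIntegral.integral_const_mul, integral_sin_sq]
      rw [Real.sin_zero, Real.cos_zero]
      ring
    · intro ψ hψ
      rw [Set.uIcc_of_le hψ0] at hψ
      have hsin : 0 ≤ Real.sin ψ :=
        Real.sin_nonneg_of_nonneg_of_le_pi hψ.1 (by linarith [hψ.2, Real.pi_pos])
      have hle : Real.sin ψ ≤ t := hsinψ₀ ▸ sinmono hψ.1 hψ2 hψ.2
      have hsb : l * Real.sin ψ ≤ b := by rw [← hlt]; nlinarith
      show (l * Real.sin ψ) ^ 2 - (max (l * Real.sin ψ - b) 0) ^ 2 = l ^ 2 * Real.sin ψ ^ 2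
      rw [max_eq_right (by linarith)]
      ring
  have p2 : ∫ ψ in ψ₀..(π/2), ((l * Real.sin ψ) ^ 2 - (max (l * Real.sin ψ - b) 0) ^ 2)
      = 2 * b * l * Real.cos ψ₀ - b ^ 2 * (π / 2 - ψ₀) := by
    rw [intervalIntegral.integral_congr (g := fun ψ => 2 * b * l * Real.sin ψ - b ^ 2) ?_]
    · rw [intervalIntegral.integral_sub (f := fun ψ => 2 * b * l * Real.sin ψ)
        ((continuous_const.mul Real.continuous_sin).intervalIntegrable _ _)
        (intervalIntegrable_const),
        intervalIntegral.integral_const_mul, integral_sin, intervalIntegral.integral_const]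
      rw [Real.cos_pi_div_two, smul_eq_mul]
      ring
    · intro ψ hψ
      rw [Set.uIcc_of_le hψ2] at hψ
      have hge : t ≤ Real.sin ψ := hsinψ₀ ▸ sinmono hψ0 hψ.2 hψ.1
      have hble : b ≤ l * Real.sin ψ := by rw [← hlt]; nlinarith
      show (l * Real.sin ψ) ^ 2 - (max (l * Real.sin ψ - b) 0) ^ 2
          = 2 * b * l * Real.sin ψ - b ^ 2
      rw [max_eq_left (by linarith)]
      ring
  rw [p1, p2, hsinψ₀, hcosψ₀]
  have hteq : t ^ 2 = b ^ 2 / l ^ 2 := by rw [ht, div_pow]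
  rw [hteq]
  have h5 : l ^ 2 * t = l * b := by rw [← hlt]; ring
  nlinarith [h5, Real.sqrt_nonneg (1 - b ^ 2 / l ^ 2)]

end BuffonHelpers

theorem stmt16 (l a b : ℝ) (hb : 0 < b) (hbl : b < l) (hla : l ≤ a) :
    S3 l a b = 2 * l * b
      + (2 * l * a - 2 * l * a * Faux (Real.arcsin (b / l)) (π / 2) (b / l)
        + 2 * a * b * Gaux (Real.arcsin (b / l)) (π / 2) (b / l))
      - (l ^ 2 / 2 * Real.arcsin (b / l)
        + 3 / 2 * (l * b) * Real.sqrt (1 - b ^ 2 / l ^ 2)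
        - b ^ 2 * (π / 2 - Real.arcsin (b / l))) := by
  have hl : 0 < l := hb.trans hbl
  unfold S3
  rw [A3_eq l a hl.le hla, B3_eq l b hb hbl, AB3_eq l a b hb hbl hla]
  ring
end

section
/- For real numbers l, a, b with 0 < b ≤ a < l ≤ √(a² + b²), one has S³ᴰ(l,a,b) = [2lb − 2lb·F(arcsin(a/l), π/2, a/l) + 2ab·G(arcsin(a/l), π/2, a/l)] + [2la − 2la·F(arcsin(b/l), π/2, b/l) + 2ab·G(arcsin(b/l), π/2, b/l)] − [(l²/2)·arcsin(a/l) + (3/2)·la·√(1 − a²/l²) − a²·(π/2 − arcsin(a/l))] − [(l²/2)·arcsin(b/l) + (3/2)·lb·√(1 − b²/l²) − b²·(π/2 − arcsin(b/l))] + (π/4)·l². -/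
open Real MeasureTheory Filter intervalIntegral Set
set_option maxHeartbeats 2000000

lemma arcsin_sqrt_id {t s : ℝ} (ht : 0 < t) (hts : t ≤ s) :
    Real.arcsin (Real.sqrt (s^2 - t^2) / s) = π/2 - Real.arcsin (t/s) := by
  have hs : 0 < s := lt_of_lt_of_le ht hts
  have hx : (0:ℝ) ≤ t / s := by positivity
  have h1 : Real.sqrt (s^2 - t^2) / s = Real.sqrt (1 - (t/s)^2) := by
    rw [show (1 : ℝ) - (t/s)^2 = (s^2 - t^2) / s^2 by field_simp]
    rw [Real.sqrt_div (by nlinarith : (0:ℝ) ≤ s^2 - t^2), Real.sqrt_sq hs.le]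
  rw [h1, ← Real.arccos_eq_arcsin hx, Real.arccos_eq_pi_div_two_sub_arcsin]

lemma intA (c L : ℝ) (hc : 0 < c) (hL : 0 ≤ L) :
    ∫ φ in (0:ℝ)..π, min c (L * |Real.cos φ|)
      = 2*L - 2*Real.sqrt (L^2 - c^2) + 2*c*Real.arcsin (Real.sqrt (L^2 - c^2) / L) := by
  have hpi := Real.pi_pos
  rcases le_or_gt L c with h | h
  · -- L ≤ c : integrand is L|cos φ|
    have hs : Real.sqrt (L^2 - c^2) = 0 := by
      rw [Real.sqrt_eq_zero']; nlinarith
    rw [hs]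
    have heq : ∫ φ in (0:ℝ)..π, min c (L * |Real.cos φ|)
        = ∫ φ in (0:ℝ)..π, L * |Real.cos φ| := by
      apply integral_congr
      intro φ _
      apply min_eq_right
      calc L * |Real.cos φ| ≤ L * 1 := by
            apply mul_le_mul_of_nonneg_left (abs_cos_le_one φ) hL
        _ ≤ c := by linarith
    rw [heq]
    have hcont : Continuous fun φ : ℝ => L * |Real.cos φ| := by fun_prop
    have h1 : ∫ φ in (0:ℝ)..(π/2), L * |Real.cos φ| = L := by
      rw [show (∫ φ in (0:ℝ)..(π/2), L * |Real.cos φ|) = ∫ φ in (0:ℝ)..(π/2), L * Real.cos φ from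
        integral_congr (fun φ hφ => by
          rw [uIcc_of_le (by positivity)] at hφ
          rw [abs_of_nonneg (Real.cos_nonneg_of_mem_Icc ⟨by linarith [hφ.1], hφ.2⟩)])]
      rw [intervalIntegral.integral_const_mul, integral_cos]; simp
    have h2 : ∫ φ in (π/2:ℝ)..π, L * |Real.cos φ| = L := by
      rw [show (∫ φ in (π/2:ℝ)..π, L * |Real.cos φ|) = ∫ φ in (π/2:ℝ)..π, L * -Real.cos φ from
        integral_congr (fun φ hφ => by
          rw [uIcc_of_le (by linarith)] at hφ
          rw [abs_of_nonpos (Real.cos_nonpos_of_pi_div_two_le_of_le hφ.1 (by linarith [hφ.2]))])]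
      simp only [mul_neg]
      rw [intervalIntegral.integral_neg, intervalIntegral.integral_const_mul, integral_cos]; simp
    rw [← integral_add_adjacent_intervals (b := π/2)
      (hcont.intervalIntegrable _ _) (hcont.intervalIntegrable _ _), h1, h2]
    simp [Real.arcsin_zero]
    ring
  · -- c < L
    have hL0 : 0 < L := lt_trans hc h
    set φ1 := Real.arccos (c/L) with hφ1def
    have hx0 : 0 < c/L := by positivity
    have hx1 : c/L < 1 := (div_lt_one hL0).2 h
    have hφ1pos : 0 < φ1 := Real.arccos_pos.2 hx1
    have hφ1lt : φ1 < π/2 := Real.arccos_lt_pi_div_two.2 hx0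
    have hcos1 : Real.cos φ1 = c/L := Real.cos_arccos (by linarith) (by linarith)
    have hsin1 : Real.sin φ1 = Real.sqrt (1 - (c/L)^2) := Real.sin_arccos _
    have hLsin1 : L * Real.sin φ1 = Real.sqrt (L^2 - c^2) := by
      rw [hsin1, show L^2 - c^2 = L^2 * (1 - (c/L)^2) by field_simp,
        Real.sqrt_mul (by positivity), Real.sqrt_sq hL0.le]
    have hcont : Continuous fun φ : ℝ => min c (L * |Real.cos φ|) := by fun_prop
    -- pieces
    have p1 : ∫ φ in (0:ℝ)..φ1, min c (L * |Real.cos φ|) = φ1 * c := by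
      rw [show (∫ φ in (0:ℝ)..φ1, min c (L * |Real.cos φ|)) = ∫ φ in (0:ℝ)..φ1, c from
        integral_congr (fun φ hφ => by
          rw [uIcc_of_le hφ1pos.le] at hφ
          have hcosφ : Real.cos φ1 ≤ Real.cos φ :=
            Real.cos_le_cos_of_nonneg_of_le_pi hφ.1 (by linarith) hφ.2
          have hcosnn : 0 ≤ Real.cos φ := by rw [hcos1] at hcosφ; linarith
          rw [abs_of_nonneg hcosnn]
          apply min_eq_left
          rw [hcos1] at hcosφ
          calc c = L * (c/L) := by field_simp
            _ ≤ L * Real.cos φ := by nlinarith)]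
      simp [smul_eq_mul]
    have p2 : ∫ φ in φ1..(π/2), min c (L * |Real.cos φ|) = L * (1 - Real.sin φ1) := by
      rw [show (∫ φ in φ1..(π/2), min c (L * |Real.cos φ|)) = ∫ φ in φ1..(π/2), L * Real.cos φ from
        integral_congr (fun φ hφ => by
          rw [uIcc_of_le hφ1lt.le] at hφ
          have hc1 : Real.cos φ ≤ Real.cos φ1 :=
            Real.cos_le_cos_of_nonneg_of_le_pi hφ1pos.le (by linarith [hφ.2]) hφ.1
          have hcosnn : 0 ≤ Real.cos φ := Real.cos_nonneg_of_mem_Icc ⟨by linarith [hφ.1], hφ.2⟩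
          rw [abs_of_nonneg hcosnn]
          apply min_eq_right
          rw [hcos1] at hc1
          calc L * Real.cos φ ≤ L * (c/L) := by nlinarith
            _ = c := by field_simp)]
      rw [intervalIntegral.integral_const_mul, integral_cos]; simp
    have p3 : ∫ φ in (π/2:ℝ)..(π - φ1), min c (L * |Real.cos φ|) = L * (1 - Real.sin φ1) := by
      rw [show (∫ φ in (π/2:ℝ)..(π - φ1), min c (L * |Real.cos φ|))
          = ∫ φ in (π/2:ℝ)..(π - φ1), L * -Real.cos φ from
        integral_congr (fun φ hφ => by
          rw [uIcc_of_le (by linarith)] at hφ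
          have hcosle : 0 ≥ Real.cos φ :=
            Real.cos_nonpos_of_pi_div_two_le_of_le hφ.1 (by linarith [hφ.2])
          have hc1 : Real.cos (π - φ1) ≤ Real.cos φ :=
            Real.cos_le_cos_of_nonneg_of_le_pi (by linarith [hφ.1]) (by linarith) hφ.2
          rw [Real.cos_pi_sub, hcos1] at hc1
          rw [abs_of_nonpos hcosle]
          apply min_eq_right
          calc L * -Real.cos φ ≤ L * (c/L) := by nlinarith
            _ = c := by field_simp)]
      simp only [mul_neg]
      rw [intervalIntegral.integral_neg, intervalIntegral.integral_const_mul, integral_cos]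
      rw [Real.sin_pi_sub]; simp; ring
    have p4 : ∫ φ in (π - φ1)..π, min c (L * |Real.cos φ|) = φ1 * c := by
      rw [show (∫ φ in (π - φ1)..π, min c (L * |Real.cos φ|)) = ∫ φ in (π - φ1)..π, c from
        integral_congr (fun φ hφ => by
          rw [uIcc_of_le (by linarith)] at hφ
          have hc1 : Real.cos φ ≤ Real.cos (π - φ1) :=
            Real.cos_le_cos_of_nonneg_of_le_pi (by linarith [hφ1lt]) hφ.2 hφ.1
          rw [Real.cos_pi_sub, hcos1] at hc1
          have hcosle : Real.cos φ ≤ 0 := by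
            have := hx0; nlinarith
          rw [abs_of_nonpos hcosle]
          apply min_eq_left
          calc c = L * (c/L) := by field_simp
            _ ≤ L * -Real.cos φ := by nlinarith)]
      simp [smul_eq_mul, sub_sub_cancel, mul_comm]
    have hsplit : ∫ φ in (0:ℝ)..π, min c (L * |Real.cos φ|)
        = (∫ φ in (0:ℝ)..φ1, min c (L * |Real.cos φ|))
        + (∫ φ in φ1..(π/2), min c (L * |Real.cos φ|))
        + (∫ φ in (π/2:ℝ)..(π - φ1), min c (L * |Real.cos φ|))
        + (∫ φ in (π - φ1)..π, min c (L * |Real.cos φ|)) := by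
      rw [integral_add_adjacent_intervals (hcont.intervalIntegrable _ _) (hcont.intervalIntegrable _ _),
        integral_add_adjacent_intervals (hcont.intervalIntegrable _ _) (hcont.intervalIntegrable _ _),
        integral_add_adjacent_intervals (hcont.intervalIntegrable _ _) (hcont.intervalIntegrable _ _)]
    rw [hsplit, p1, p2, p3, p4]
    have harc : Real.arcsin (Real.sqrt (L^2 - c^2) / L) = π/2 - Real.arcsin (c/L) :=
      arcsin_sqrt_id hc h.le
    have hφ1eq : φ1 = π/2 - Real.arcsin (c/L) := Real.arccos_eq_pi_div_two_sub_arcsin _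
    rw [harc, ← hφ1eq, ← hLsin1]
    ring

lemma intB (c L : ℝ) (hc : 0 < c) (hL : 0 ≤ L) :
    ∫ φ in (0:ℝ)..π, min c (L * Real.sin φ)
      = 2*L - 2*Real.sqrt (L^2 - c^2) + 2*c*Real.arcsin (Real.sqrt (L^2 - c^2) / L) := by
  have hpi := Real.pi_pos
  rcases le_or_gt L c with h | h
  · have hs : Real.sqrt (L^2 - c^2) = 0 := by
      rw [Real.sqrt_eq_zero']; nlinarith
    rw [hs]
    have heq : ∫ φ in (0:ℝ)..π, min c (L * Real.sin φ) = ∫ φ in (0:ℝ)..π, L * Real.sin φ := by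
      apply integral_congr
      intro φ hφ
      rw [uIcc_of_le hpi.le] at hφ
      apply min_eq_right
      calc L * Real.sin φ ≤ L * 1 := by
            apply mul_le_mul_of_nonneg_left (Real.sin_le_one φ) hL
        _ ≤ c := by linarith
    rw [heq, intervalIntegral.integral_const_mul, integral_sin]
    simp [Real.arcsin_zero]; ring
  · have hL0 : 0 < L := lt_trans hc h
    set φ2 := Real.arcsin (c/L) with hφ2def
    have hx0 : 0 < c/L := by positivity
    have hx1 : c/L < 1 := (div_lt_one hL0).2 h
    have hφ2pos : 0 < φ2 := Real.arcsin_pos.2 hx0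
    have hφ2lt : φ2 < π/2 := Real.arcsin_lt_pi_div_two.2 hx1
    have hsin2 : Real.sin φ2 = c/L := Real.sin_arcsin (by linarith) (by linarith)
    have hcos2 : Real.cos φ2 = Real.sqrt (1 - (c/L)^2) := Real.cos_arcsin _
    have hLcos2 : L * Real.cos φ2 = Real.sqrt (L^2 - c^2) := by
      rw [hcos2, show L^2 - c^2 = L^2 * (1 - (c/L)^2) by field_simp,
        Real.sqrt_mul (by positivity), Real.sqrt_sq hL0.le]
    have hcont : Continuous fun φ : ℝ => min c (L * Real.sin φ) := by fun_prop
    have p1 : ∫ φ in (0:ℝ)..φ2, min c (L * Real.sin φ) = L * (1 - Real.cos φ2) := by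
      rw [show (∫ φ in (0:ℝ)..φ2, min c (L * Real.sin φ)) = ∫ φ in (0:ℝ)..φ2, L * Real.sin φ from
        integral_congr (fun φ hφ => by
          rw [uIcc_of_le hφ2pos.le] at hφ
          have hs2 : Real.sin φ ≤ Real.sin φ2 :=
            Real.sin_le_sin_of_le_of_le_pi_div_two (by linarith [hφ.1]) hφ2lt.le hφ.2
          rw [hsin2] at hs2
          apply min_eq_right
          calc L * Real.sin φ ≤ L * (c/L) := by nlinarith
            _ = c := by field_simp)]
      rw [intervalIntegral.integral_const_mul, integral_sin]; simp
    have p2 : ∫ φ in φ2..(π - φ2), min c (L * Real.sin φ) = (π - 2*φ2) * c := by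
      rw [show (∫ φ in φ2..(π - φ2), min c (L * Real.sin φ)) = ∫ φ in φ2..(π - φ2), c from
        integral_congr (fun φ hφ => by
          rw [uIcc_of_le (by linarith)] at hφ
          have hs2 : Real.sin φ2 ≤ Real.sin φ := by
            rcases le_or_gt φ (π/2) with hhalf | hhalf
            · exact Real.sin_le_sin_of_le_of_le_pi_div_two (by linarith [hφ2pos]) hhalf hφ.1
            · rw [← Real.sin_pi_sub φ]
              exact Real.sin_le_sin_of_le_of_le_pi_div_two (by linarith [hφ2pos])
                (by linarith [hφ.1]) (by linarith [hφ.2])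
          rw [hsin2] at hs2
          apply min_eq_left
          calc c = L * (c/L) := by field_simp
            _ ≤ L * Real.sin φ := by nlinarith)]
      simp only [intervalIntegral.integral_const, smul_eq_mul]; ring
    have p3 : ∫ φ in (π - φ2)..π, min c (L * Real.sin φ) = L * (1 - Real.cos φ2) := by
      rw [show (∫ φ in (π - φ2)..π, min c (L * Real.sin φ)) = ∫ φ in (π - φ2)..π, L * Real.sin φ from
        integral_congr (fun φ hφ => by
          rw [uIcc_of_le (by linarith)] at hφ
          have hs2 : Real.sin φ ≤ Real.sin φ2 := by
            rw [← Real.sin_pi_sub φ]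
            exact Real.sin_le_sin_of_le_of_le_pi_div_two (by linarith [hφ.2]) hφ2lt.le
              (by linarith [hφ.1])
          rw [hsin2] at hs2
          apply min_eq_right
          calc L * Real.sin φ ≤ L * (c/L) := by nlinarith
            _ = c := by field_simp)]
      rw [intervalIntegral.integral_const_mul, integral_sin, Real.cos_pi_sub, Real.cos_pi]; ring
    rw [← integral_add_adjacent_intervals (b := φ2) (hcont.intervalIntegrable _ _)
        (hcont.intervalIntegrable _ _),
      ← integral_add_adjacent_intervals (a := φ2) (b := π - φ2) (hcont.intervalIntegrable _ _)
        (hcont.intervalIntegrable _ _), p1, p2, p3]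
    rw [arcsin_sqrt_id hc h.le, ← hφ2def, ← hLcos2]
    ring

lemma intAB (a b L : ℝ) (hb : 0 < b) (hba : b ≤ a) (hL : 0 ≤ L) (hab : L^2 ≤ a^2 + b^2) :
    ∫ φ in (0:ℝ)..π, min a (L * |Real.cos φ|) * min b (L * Real.sin φ)
      = L^2 - max (L - b) 0 ^ 2 - max (L - a) 0 ^ 2 := by
  have hpi := Real.pi_pos
  have ha : 0 < a := lt_of_lt_of_le hb hba
  have hcont : Continuous fun φ : ℝ => min a (L * |Real.cos φ|) * min b (L * Real.sin φ) := by
    fun_prop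
  rcases le_or_gt L b with h1 | h1
  · -- L ≤ b: integrand = L|cos|·L sin
    have hmb : max (L - b) 0 = 0 := max_eq_right (by linarith)
    have hma : max (L - a) 0 = 0 := max_eq_right (by linarith)
    have e1 : ∫ φ in (0:ℝ)..(π/2), min a (L * |Real.cos φ|) * min b (L * Real.sin φ)
        = L^2 / 2 := by
      rw [show (∫ φ in (0:ℝ)..(π/2), min a (L * |Real.cos φ|) * min b (L * Real.sin φ))
          = ∫ φ in (0:ℝ)..(π/2), L^2 * (Real.sin φ * Real.cos φ) from
        integral_congr (fun φ hφ => by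
          rw [uIcc_of_le (by positivity)] at hφ
          have hcos : 0 ≤ Real.cos φ := Real.cos_nonneg_of_mem_Icc ⟨by linarith [hφ.1], hφ.2⟩
          rw [abs_of_nonneg hcos,
            min_eq_right (by nlinarith [Real.cos_le_one φ] : L * Real.cos φ ≤ a),
            min_eq_right (by nlinarith [Real.sin_le_one φ] : L * Real.sin φ ≤ b)]
          ring)]
      rw [intervalIntegral.integral_const_mul, integral_sin_mul_cos₁]
      simp
      ring
    have e2 : ∫ φ in (π/2:ℝ)..π, min a (L * |Real.cos φ|) * min b (L * Real.sin φ)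
        = L^2 / 2 := by
      rw [show (∫ φ in (π/2:ℝ)..π, min a (L * |Real.cos φ|) * min b (L * Real.sin φ))
          = ∫ φ in (π/2:ℝ)..π, -(L^2 * (Real.sin φ * Real.cos φ)) from
        integral_congr (fun φ hφ => by
          rw [uIcc_of_le (by linarith)] at hφ
          have hcos : Real.cos φ ≤ 0 :=
            Real.cos_nonpos_of_pi_div_two_le_of_le hφ.1 (by linarith [hφ.2])
          rw [abs_of_nonpos hcos,
            min_eq_right (by nlinarith [Real.neg_one_le_cos φ] : L * -Real.cos φ ≤ a),
            min_eq_right (by nlinarith [Real.sin_le_one φ] : L * Real.sin φ ≤ b)]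
          ring)]
      rw [intervalIntegral.integral_neg, intervalIntegral.integral_const_mul, integral_sin_mul_cos₁]
      simp
      ring
    rw [← integral_add_adjacent_intervals (b := π/2) (hcont.intervalIntegrable _ _)
      (hcont.intervalIntegrable _ _), e1, e2, hmb, hma]
    ring
  · -- b < L
    have hL0 : 0 < L := lt_trans hb h1
    set φ2 := Real.arcsin (b/L) with hφ2def
    have hx0 : 0 < b/L := by positivity
    have hx1 : b/L < 1 := (div_lt_one hL0).2 h1
    have hφ2pos : 0 < φ2 := Real.arcsin_pos.2 hx0
    have hφ2lt : φ2 < π/2 := Real.arcsin_lt_pi_div_two.2 hx1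
    have hsin2 : Real.sin φ2 = b/L := Real.sin_arcsin (by linarith) (by linarith)
    have hcos2 : Real.cos φ2 = Real.sqrt (1 - (b/L)^2) := Real.cos_arcsin _
    have hcos2nn : 0 ≤ Real.cos φ2 := by rw [hcos2]; positivity
    -- key bound : L * cos φ2 ≤ a  (uses L² ≤ a² + b²)
    have hkey : L * Real.cos φ2 ≤ a := by
      have h2 : (L * Real.cos φ2)^2 = L^2 - b^2 := by
        rw [hcos2, mul_pow, Real.sq_sqrt (by nlinarith : (0:ℝ) ≤ 1 - (b/L)^2)]
        field_simp
      nlinarith [mul_nonneg hL0.le hcos2nn]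
    -- min b (L sin φ) = L sin φ  on regions where sin φ ≤ b/L etc.
    have hminb_of : ∀ φ : ℝ, Real.sin φ ≤ b/L → min b (L * Real.sin φ) = L * Real.sin φ := by
      intro φ hφ
      apply min_eq_right
      calc L * Real.sin φ ≤ L * (b/L) := by nlinarith
        _ = b := by field_simp
    have hminb_of' : ∀ φ : ℝ, b/L ≤ Real.sin φ → min b (L * Real.sin φ) = b := by
      intro φ hφ
      apply min_eq_left
      calc b = L * (b/L) := by field_simp
        _ ≤ L * Real.sin φ := by nlinarith
    have hmula : ∀ x : ℝ, x ≤ a/L → L * x ≤ a := fun x hx => by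
      calc L * x ≤ L * (a/L) := by nlinarith
        _ = a := by field_simp
    have hamul : ∀ x : ℝ, a/L ≤ x → a ≤ L * x := fun x hx => by
      calc a = L * (a/L) := by field_simp
        _ ≤ L * x := by nlinarith
    rcases le_or_gt L a with h2 | h2
    · -- b < L ≤ a : min a (L|cos|) = L|cos|
      have hma : max (L - a) 0 = 0 := max_eq_right (by linarith)
      have hmb : max (L - b) 0 = L - b := max_eq_left (by linarith)
      have e1 : ∫ φ in (0:ℝ)..φ2, min a (L * |Real.cos φ|) * min b (L * Real.sin φ)
          = L^2 * Real.sin φ2 ^2 / 2 := by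
        rw [show (∫ φ in (0:ℝ)..φ2, min a (L * |Real.cos φ|) * min b (L * Real.sin φ))
            = ∫ φ in (0:ℝ)..φ2, L^2 * (Real.sin φ * Real.cos φ) from
          integral_congr (fun φ hφ => by
            rw [uIcc_of_le hφ2pos.le] at hφ
            have hcos : 0 ≤ Real.cos φ :=
              Real.cos_nonneg_of_mem_Icc ⟨by linarith [hφ.1], by linarith [hφ.2]⟩
            have hsin : Real.sin φ ≤ b/L := by
              rw [← hsin2]
              exact Real.sin_le_sin_of_le_of_le_pi_div_two (by linarith [hφ.1]) hφ2lt.le hφ.2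
            rw [abs_of_nonneg hcos,
              min_eq_right (by nlinarith [Real.cos_le_one φ] : L * Real.cos φ ≤ a),
              hminb_of φ hsin]
            ring)]
        rw [intervalIntegral.integral_const_mul, integral_sin_mul_cos₁]
        simp
        ring
      have e2 : ∫ φ in φ2..(π/2), min a (L * |Real.cos φ|) * min b (L * Real.sin φ)
          = L * b * (1 - Real.sin φ2) := by
        rw [show (∫ φ in φ2..(π/2), min a (L * |Real.cos φ|) * min b (L * Real.sin φ))
            = ∫ φ in φ2..(π/2), (L * b) * Real.cos φ from
          integral_congr (fun φ hφ => by
            rw [uIcc_of_le hφ2lt.le] at hφ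
            have hcos : 0 ≤ Real.cos φ :=
              Real.cos_nonneg_of_mem_Icc ⟨by linarith [hφ.1, hφ2pos], hφ.2⟩
            have hsin : b/L ≤ Real.sin φ := by
              rw [← hsin2]
              exact Real.sin_le_sin_of_le_of_le_pi_div_two (by linarith [hφ2pos]) (by linarith [hφ.2]) hφ.1
            rw [abs_of_nonneg hcos,
              min_eq_right (by nlinarith [Real.cos_le_one φ] : L * Real.cos φ ≤ a),
              hminb_of' φ hsin]
            ring)]
        rw [intervalIntegral.integral_const_mul, integral_cos]
        simp
      have e3 : ∫ φ in (π/2:ℝ)..(π - φ2), min a (L * |Real.cos φ|) * min b (L * Real.sin φ)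
          = L * b * (1 - Real.sin φ2) := by
        rw [show (∫ φ in (π/2:ℝ)..(π - φ2), min a (L * |Real.cos φ|) * min b (L * Real.sin φ))
            = ∫ φ in (π/2:ℝ)..(π - φ2), -((L * b) * Real.cos φ) from
          integral_congr (fun φ hφ => by
            rw [uIcc_of_le (by linarith)] at hφ
            have hcos : Real.cos φ ≤ 0 :=
              Real.cos_nonpos_of_pi_div_two_le_of_le hφ.1 (by linarith [hφ.2])
            have hsin : b/L ≤ Real.sin φ := by
              rw [← hsin2, ← Real.sin_pi_sub φ]
              exact Real.sin_le_sin_of_le_of_le_pi_div_two (by linarith [hφ2pos])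
                (by linarith [hφ.1]) (by linarith [hφ.2])
            rw [abs_of_nonpos hcos,
              min_eq_right (by nlinarith [Real.neg_one_le_cos φ] : L * -Real.cos φ ≤ a),
              hminb_of' φ hsin]
            ring)]
        rw [intervalIntegral.integral_neg, intervalIntegral.integral_const_mul, integral_cos, Real.sin_pi_sub]
        simp; ring
      have e4 : ∫ φ in (π - φ2)..π, min a (L * |Real.cos φ|) * min b (L * Real.sin φ)
          = L^2 * Real.sin φ2 ^2 / 2 := by
        rw [show (∫ φ in (π - φ2)..π, min a (L * |Real.cos φ|) * min b (L * Real.sin φ))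
            = ∫ φ in (π - φ2)..π, -(L^2 * (Real.sin φ * Real.cos φ)) from
          integral_congr (fun φ hφ => by
            rw [uIcc_of_le (by linarith)] at hφ
            have hcos : Real.cos φ ≤ 0 :=
              Real.cos_nonpos_of_pi_div_two_le_of_le (by linarith [hφ.1]) (by linarith [hφ.2])
            have hsin : Real.sin φ ≤ b/L := by
              rw [← hsin2, ← Real.sin_pi_sub φ]
              exact Real.sin_le_sin_of_le_of_le_pi_div_two (by linarith [hφ.2]) hφ2lt.le
                (by linarith [hφ.1])
            rw [abs_of_nonpos hcos,
              min_eq_right (by nlinarith [Real.neg_one_le_cos φ] : L * -Real.cos φ ≤ a),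
              hminb_of φ hsin]
            ring)]
        rw [intervalIntegral.integral_neg, intervalIntegral.integral_const_mul, integral_sin_mul_cos₁,
          Real.sin_pi_sub]
        simp
        ring
      rw [← integral_add_adjacent_intervals (b := φ2) (hcont.intervalIntegrable _ _)
          (hcont.intervalIntegrable _ _),
        ← integral_add_adjacent_intervals (a := φ2) (b := π/2) (hcont.intervalIntegrable _ _)
          (hcont.intervalIntegrable _ _),
        ← integral_add_adjacent_intervals (a := π/2) (b := π - φ2) (hcont.intervalIntegrable _ _)
          (hcont.intervalIntegrable _ _), e1, e2, e3, e4, hma, hmb, hsin2]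
      field_simp
      ring
    · -- a < L
      set φ1 := Real.arccos (a/L) with hφ1def
      have hy0 : 0 < a/L := by positivity
      have hy1 : a/L < 1 := (div_lt_one hL0).2 h2
      have hφ1pos : 0 < φ1 := Real.arccos_pos.2 hy1
      have hφ1lt : φ1 < π/2 := Real.arccos_lt_pi_div_two.2 hy0
      have hcos1 : Real.cos φ1 = a/L := Real.cos_arccos (by linarith) (by linarith)
      have hsin1 : Real.sin φ1 = Real.sqrt (1 - (a/L)^2) := Real.sin_arccos _
      have hsin1sq : Real.sin φ1 ^ 2 = 1 - (a/L)^2 := by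
        rw [hsin1, Real.sq_sqrt (by nlinarith : (0:ℝ) ≤ 1 - (a/L)^2)]
      have hsin1nn : 0 ≤ Real.sin φ1 := by rw [hsin1]; positivity
      -- φ1 ≤ φ2
      have hsin12 : Real.sin φ1 ≤ Real.sin φ2 := by
        rw [hsin2]
        have hsum : 1 ≤ (a/L)^2 + (b/L)^2 := by
          rw [div_pow, div_pow, ← add_div, le_div_iff₀ (by positivity)]
          linarith
        rw [hsin1]
        calc Real.sqrt (1 - (a/L)^2) ≤ Real.sqrt ((b/L)^2) :=
              Real.sqrt_le_sqrt (by linarith)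
          _ = b/L := Real.sqrt_sq hx0.le
      have h12 : φ1 ≤ φ2 := by
        by_contra hcon
        push_neg at hcon
        have := Real.strictMonoOn_sin ⟨by linarith [hφ2pos], hφ2lt.le⟩
          ⟨by linarith [hφ1pos], hφ1lt.le⟩ hcon
        linarith
      have hma : max (L - a) 0 = L - a := max_eq_left (by linarith)
      have hmb : max (L - b) 0 = L - b := max_eq_left (by linarith)
      have e1 : ∫ φ in (0:ℝ)..φ1, min a (L * |Real.cos φ|) * min b (L * Real.sin φ)
          = a * L * (1 - Real.cos φ1) := by
        rw [show (∫ φ in (0:ℝ)..φ1, min a (L * |Real.cos φ|) * min b (L * Real.sin φ))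
            = ∫ φ in (0:ℝ)..φ1, (a * L) * Real.sin φ from
          integral_congr (fun φ hφ => by
            rw [uIcc_of_le hφ1pos.le] at hφ
            have hcos : Real.cos φ1 ≤ Real.cos φ :=
              Real.cos_le_cos_of_nonneg_of_le_pi hφ.1 (by linarith) hφ.2
            rw [hcos1] at hcos
            have hcosnn : 0 ≤ Real.cos φ := by linarith
            have hsin : Real.sin φ ≤ b/L := by
              rw [← hsin2]
              refine le_trans ?_ hsin12
              exact Real.sin_le_sin_of_le_of_le_pi_div_two (by linarith [hφ.1]) hφ1lt.le hφ.2
            rw [abs_of_nonneg hcosnn,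
              min_eq_left (hamul _ hcos),
              hminb_of φ hsin]
            ring)]
        rw [intervalIntegral.integral_const_mul, integral_sin]
        simp
      have e2 : ∫ φ in φ1..φ2, min a (L * |Real.cos φ|) * min b (L * Real.sin φ)
          = L^2 * (Real.sin φ2 ^2 - Real.sin φ1 ^2) / 2 := by
        rw [show (∫ φ in φ1..φ2, min a (L * |Real.cos φ|) * min b (L * Real.sin φ))
            = ∫ φ in φ1..φ2, L^2 * (Real.sin φ * Real.cos φ) from
          integral_congr (fun φ hφ => by
            rw [uIcc_of_le h12] at hφ
            have hcosnn : 0 ≤ Real.cos φ :=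
              Real.cos_nonneg_of_mem_Icc ⟨by linarith [hφ.1, hφ1pos], by linarith [hφ.2]⟩
            have hcos : Real.cos φ ≤ Real.cos φ1 :=
              Real.cos_le_cos_of_nonneg_of_le_pi hφ1pos.le (by linarith [hφ.2]) hφ.1
            rw [hcos1] at hcos
            have hsin : Real.sin φ ≤ b/L := by
              rw [← hsin2]
              exact Real.sin_le_sin_of_le_of_le_pi_div_two (by linarith [hφ.1, hφ1pos])
                hφ2lt.le hφ.2
            rw [abs_of_nonneg hcosnn,
              min_eq_right (hmula _ hcos),
              hminb_of φ hsin]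
            ring)]
        rw [intervalIntegral.integral_const_mul, integral_sin_mul_cos₁]
        ring
      have e3 : ∫ φ in φ2..(π/2), min a (L * |Real.cos φ|) * min b (L * Real.sin φ)
          = L * b * (1 - Real.sin φ2) := by
        rw [show (∫ φ in φ2..(π/2), min a (L * |Real.cos φ|) * min b (L * Real.sin φ))
            = ∫ φ in φ2..(π/2), (L * b) * Real.cos φ from
          integral_congr (fun φ hφ => by
            rw [uIcc_of_le hφ2lt.le] at hφ
            have hcosnn : 0 ≤ Real.cos φ :=
              Real.cos_nonneg_of_mem_Icc ⟨by linarith [hφ.1, hφ2pos], hφ.2⟩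
            have hcos : Real.cos φ ≤ Real.cos φ2 :=
              Real.cos_le_cos_of_nonneg_of_le_pi hφ2pos.le (by linarith [hφ.2]) hφ.1
            have hsin : b/L ≤ Real.sin φ := by
              rw [← hsin2]
              exact Real.sin_le_sin_of_le_of_le_pi_div_two (by linarith [hφ2pos])
                (by linarith [hφ.2]) hφ.1
            rw [abs_of_nonneg hcosnn,
              min_eq_right (by nlinarith [hkey] : L * Real.cos φ ≤ a),
              hminb_of' φ hsin]
            ring)]
        rw [intervalIntegral.integral_const_mul, integral_cos]
        simp
      have e4 : ∫ φ in (π/2:ℝ)..(π - φ2), min a (L * |Real.cos φ|) * min b (L * Real.sin φ)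
          = L * b * (1 - Real.sin φ2) := by
        rw [show (∫ φ in (π/2:ℝ)..(π - φ2), min a (L * |Real.cos φ|) * min b (L * Real.sin φ))
            = ∫ φ in (π/2:ℝ)..(π - φ2), -((L * b) * Real.cos φ) from
          integral_congr (fun φ hφ => by
            rw [uIcc_of_le (by linarith)] at hφ
            have hcos : Real.cos φ ≤ 0 :=
              Real.cos_nonpos_of_pi_div_two_le_of_le hφ.1 (by linarith [hφ.2])
            have hcos' : Real.cos (π - φ2) ≤ Real.cos φ :=
              Real.cos_le_cos_of_nonneg_of_le_pi (by linarith [hφ.1]) (by linarith) hφ.2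
            rw [Real.cos_pi_sub] at hcos'
            have hsin : b/L ≤ Real.sin φ := by
              rw [← hsin2, ← Real.sin_pi_sub φ]
              exact Real.sin_le_sin_of_le_of_le_pi_div_two (by linarith [hφ2pos])
                (by linarith [hφ.1]) (by linarith [hφ.2])
            rw [abs_of_nonpos hcos,
              min_eq_right (by nlinarith [hkey] : L * -Real.cos φ ≤ a),
              hminb_of' φ hsin]
            ring)]
        rw [intervalIntegral.integral_neg, intervalIntegral.integral_const_mul, integral_cos, Real.sin_pi_sub]
        simp; ring
      have e5 : ∫ φ in (π - φ2)..(π - φ1), min a (L * |Real.cos φ|) * min b (L * Real.sin φ)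
          = L^2 * (Real.sin φ2 ^2 - Real.sin φ1 ^2) / 2 := by
        rw [show (∫ φ in (π - φ2)..(π - φ1), min a (L * |Real.cos φ|) * min b (L * Real.sin φ))
            = ∫ φ in (π - φ2)..(π - φ1), -(L^2 * (Real.sin φ * Real.cos φ)) from
          integral_congr (fun φ hφ => by
            rw [uIcc_of_le (by linarith)] at hφ
            have hcos : Real.cos φ ≤ 0 :=
              Real.cos_nonpos_of_pi_div_two_le_of_le (by linarith [hφ.1]) (by linarith [hφ.2, hφ1pos])
            have hcos' : Real.cos (π - φ1) ≤ Real.cos φ :=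
              Real.cos_le_cos_of_nonneg_of_le_pi (by linarith [hφ.1]) (by linarith [hφ1pos]) hφ.2
            rw [Real.cos_pi_sub, hcos1] at hcos'
            have hsin : Real.sin φ ≤ b/L := by
              rw [← hsin2, ← Real.sin_pi_sub φ]
              exact Real.sin_le_sin_of_le_of_le_pi_div_two (by linarith [hφ.2, hφ1pos])
                hφ2lt.le (by linarith [hφ.1])
            rw [abs_of_nonpos hcos,
              min_eq_right (hmula _ (by linarith [hcos'])),
              hminb_of φ hsin]
            ring)]
        rw [intervalIntegral.integral_neg, intervalIntegral.integral_const_mul, integral_sin_mul_cos₁,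
          Real.sin_pi_sub, Real.sin_pi_sub]
        ring
      have e6 : ∫ φ in (π - φ1)..π, min a (L * |Real.cos φ|) * min b (L * Real.sin φ)
          = a * L * (1 - Real.cos φ1) := by
        rw [show (∫ φ in (π - φ1)..π, min a (L * |Real.cos φ|) * min b (L * Real.sin φ))
            = ∫ φ in (π - φ1)..π, (a * L) * Real.sin φ from
          integral_congr (fun φ hφ => by
            rw [uIcc_of_le (by linarith)] at hφ
            have hcos' : Real.cos φ ≤ Real.cos (π - φ1) :=
              Real.cos_le_cos_of_nonneg_of_le_pi (by linarith [hφ1lt]) hφ.2 hφ.1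
            rw [Real.cos_pi_sub, hcos1] at hcos'
            have hcos : Real.cos φ ≤ 0 := by nlinarith
            have hsin : Real.sin φ ≤ b/L := by
              rw [← hsin2, ← Real.sin_pi_sub φ]
              refine le_trans ?_ hsin12
              exact Real.sin_le_sin_of_le_of_le_pi_div_two (by linarith [hφ.2]) hφ1lt.le
                (by linarith [hφ.1])
            rw [abs_of_nonpos hcos,
              min_eq_left (hamul _ (by linarith [hcos'])),
              hminb_of φ hsin]
            ring)]
        rw [intervalIntegral.integral_const_mul, integral_sin, Real.cos_pi, Real.cos_pi_sub, hcos1]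
        ring
      rw [← integral_add_adjacent_intervals (b := φ1) (hcont.intervalIntegrable _ _)
          (hcont.intervalIntegrable _ _),
        ← integral_add_adjacent_intervals (a := φ1) (b := φ2) (hcont.intervalIntegrable _ _)
          (hcont.intervalIntegrable _ _),
        ← integral_add_adjacent_intervals (a := φ2) (b := π/2) (hcont.intervalIntegrable _ _)
          (hcont.intervalIntegrable _ _),
        ← integral_add_adjacent_intervals (a := π/2) (b := π - φ2) (hcont.intervalIntegrable _ _)
          (hcont.intervalIntegrable _ _),
        ← integral_add_adjacent_intervals (a := π - φ2) (b := π - φ1) (hcont.intervalIntegrable _ _)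
          (hcont.intervalIntegrable _ _),
        e1, e2, e3, e4, e5, e6, hma, hmb, hsin2, hcos1, hsin1sq]
      field_simp
      ring

lemma sqrt_cont (t : ℝ) : Continuous fun ψ : ℝ => Real.sqrt (Real.sin ψ^2 - t^2) :=
  ((Real.continuous_sin.pow 2).sub continuous_const).sqrt

lemma q_integrable (t u v : ℝ) :
    IntervalIntegrable (fun ψ => Real.arcsin (Real.sqrt (Real.sin ψ^2 - t^2) / Real.sin ψ))
      volume u v := by
  rw [intervalIntegrable_iff]
  apply MeasureTheory.Integrable.mono' (g := fun _ => π/2)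
  · exact integrableOn_const measure_Ioc_lt_top.ne (by simp)
  · apply Measurable.aestronglyMeasurable
    exact Real.continuous_arcsin.measurable.comp
      ((sqrt_cont t).measurable.div Real.measurable_sin)
  · refine Filter.Eventually.of_forall fun x => ?_
    have h := Real.arcsin_mem_Icc (Real.sqrt (Real.sin x^2 - t^2) / Real.sin x)
    rw [Real.norm_eq_abs, abs_le]
    exact ⟨h.1, h.2⟩

section outer
variable {l c : ℝ} (hc : 0 < c) (hcl : c < l)
include hc hcl

lemma sin_ge_on {ψ : ℝ} (hψ1 : Real.arcsin (c/l) ≤ ψ) (hψ2 : ψ ≤ π/2) :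
    c/l ≤ Real.sin ψ := by
  have hl0 : 0 < l := lt_trans hc hcl
  have ht0 : 0 < c/l := div_pos hc hl0
  have ht1 : c/l < 1 := (div_lt_one hl0).2 hcl
  have h := Real.sin_le_sin_of_le_of_le_pi_div_two
    (by linarith [Real.arcsin_nonneg.2 ht0.le, Real.pi_pos]) hψ2 hψ1
  rwa [Real.sin_arcsin (by linarith) ht1.le] at h

lemma sin_le_on {ψ : ℝ} (hψ1 : 0 ≤ ψ) (hψ2 : ψ ≤ Real.arcsin (c/l)) :
    Real.sin ψ ≤ c/l := by
  have hl0 : 0 < l := lt_trans hc hcl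
  have ht0 : 0 < c/l := div_pos hc hl0
  have ht1 : c/l < 1 := (div_lt_one hl0).2 hcl
  have h := Real.sin_le_sin_of_le_of_le_pi_div_two (by linarith [Real.pi_pos])
    (Real.arcsin_le_pi_div_two (c/l)) hψ2
  rwa [Real.sin_arcsin (by linarith) ht1.le] at h

lemma outer_sqrt :
    ∫ ψ in (0:ℝ)..(π/2), Real.sqrt (Real.sin ψ^2 - (c/l)^2)
      = Faux (Real.arcsin (c/l)) (π/2) (c/l) := by
  have hα0 : 0 ≤ Real.arcsin (c/l) := Real.arcsin_nonneg.2 (div_nonneg hc.le (lt_trans hc hcl).le)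
  have hα2 : Real.arcsin (c/l) ≤ π/2 := Real.arcsin_le_pi_div_two _
  rw [Faux, ← integral_add_adjacent_intervals (b := Real.arcsin (c/l))
    ((sqrt_cont _).intervalIntegrable _ _) ((sqrt_cont _).intervalIntegrable _ _)]
  have h0 : ∫ ψ in (0:ℝ)..(Real.arcsin (c/l)), Real.sqrt (Real.sin ψ^2 - (c/l)^2) = 0 := by
    rw [show (∫ ψ in (0:ℝ)..(Real.arcsin (c/l)), Real.sqrt (Real.sin ψ^2 - (c/l)^2))
        = ∫ ψ in (0:ℝ)..(Real.arcsin (c/l)), (0:ℝ) from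
      integral_congr (fun ψ hψ => by
        rw [uIcc_of_le hα0] at hψ
        have h1 : Real.sin ψ ≤ c/l := sin_le_on hc hcl hψ.1 hψ.2
        have h2 : 0 ≤ Real.sin ψ := Real.sin_nonneg_of_nonneg_of_le_pi hψ.1
          (by linarith [Real.pi_pos, hψ.2, Real.arcsin_le_pi_div_two (c/l)])
        rw [Real.sqrt_eq_zero']
        nlinarith)]
    simp
  rw [h0, zero_add]

lemma outer_arcsin :
    ∫ ψ in (0:ℝ)..(π/2), Real.arcsin (Real.sqrt (Real.sin ψ^2 - (c/l)^2) / Real.sin ψ)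
      = Gaux (Real.arcsin (c/l)) (π/2) (c/l) := by
  have hα0 : 0 ≤ Real.arcsin (c/l) := Real.arcsin_nonneg.2 (div_nonneg hc.le (lt_trans hc hcl).le)
  have hα2 : Real.arcsin (c/l) ≤ π/2 := Real.arcsin_le_pi_div_two _
  rw [Gaux, ← integral_add_adjacent_intervals (b := Real.arcsin (c/l))
    (q_integrable _ _ _) (q_integrable _ _ _)]
  have h0 : ∫ ψ in (0:ℝ)..(Real.arcsin (c/l)),
      Real.arcsin (Real.sqrt (Real.sin ψ^2 - (c/l)^2) / Real.sin ψ) = 0 := by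
    rw [show (∫ ψ in (0:ℝ)..(Real.arcsin (c/l)),
          Real.arcsin (Real.sqrt (Real.sin ψ^2 - (c/l)^2) / Real.sin ψ))
        = ∫ ψ in (0:ℝ)..(Real.arcsin (c/l)), (0:ℝ) from
      integral_congr (fun ψ hψ => by
        rw [uIcc_of_le hα0] at hψ
        have h1 : Real.sin ψ ≤ c/l := sin_le_on hc hcl hψ.1 hψ.2
        have h2 : 0 ≤ Real.sin ψ := Real.sin_nonneg_of_nonneg_of_le_pi hψ.1
          (by linarith [Real.pi_pos, hψ.2, Real.arcsin_le_pi_div_two (c/l)])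
        have hs : Real.sqrt (Real.sin ψ^2 - (c/l)^2) = 0 := by
          rw [Real.sqrt_eq_zero']; nlinarith
        rw [hs, zero_div, Real.arcsin_zero])]
    simp
  rw [h0, zero_add]
  apply integral_congr
  intro ψ hψ
  rw [uIcc_of_le hα2] at hψ
  have h1 : c/l ≤ Real.sin ψ := sin_ge_on hc hcl hψ.1 hψ.2
  exact arcsin_sqrt_id (div_pos hc (lt_trans hc hcl)) h1

lemma outer_max :
    ∫ ψ in (0:ℝ)..(π/2), (max (l * Real.sin ψ - c) 0)^2
      = l^2*(π/2 - Real.arcsin (c/l))/2 - 3/2*(l*c)*Real.sqrt (1-(c/l)^2)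
        + c^2*(π/2 - Real.arcsin (c/l)) := by
  have hl0 : 0 < l := lt_trans hc hcl
  have hα0 : 0 ≤ Real.arcsin (c/l) := Real.arcsin_nonneg.2 (div_nonneg hc.le (lt_trans hc hcl).le)
  have hα2 : Real.arcsin (c/l) ≤ π/2 := Real.arcsin_le_pi_div_two _
  have ht1 : c/l < 1 := (div_lt_one hl0).2 hcl
  have ht0 : 0 < c/l := div_pos hc hl0
  have hsinα : Real.sin (Real.arcsin (c/l)) = c/l :=
    Real.sin_arcsin (by linarith) ht1.le
  have hcosα : Real.cos (Real.arcsin (c/l)) = Real.sqrt (1-(c/l)^2) := Real.cos_arcsin _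
  have hcont : Continuous fun ψ : ℝ => (max (l * Real.sin ψ - c) 0)^2 := by fun_prop
  rw [← integral_add_adjacent_intervals (b := Real.arcsin (c/l))
    (hcont.intervalIntegrable _ _) (hcont.intervalIntegrable _ _)]
  have h0 : ∫ ψ in (0:ℝ)..(Real.arcsin (c/l)), (max (l * Real.sin ψ - c) 0)^2 = 0 := by
    rw [show (∫ ψ in (0:ℝ)..(Real.arcsin (c/l)), (max (l * Real.sin ψ - c) 0)^2)
        = ∫ ψ in (0:ℝ)..(Real.arcsin (c/l)), (0:ℝ) from
      integral_congr (fun ψ hψ => by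
        rw [uIcc_of_le hα0] at hψ
        have h1 : Real.sin ψ ≤ c/l := sin_le_on hc hcl hψ.1 hψ.2
        have h2 : l * Real.sin ψ ≤ c := by
          calc l * Real.sin ψ ≤ l * (c/l) := by nlinarith
            _ = c := by field_simp
        rw [max_eq_right (by linarith)]
        norm_num)]
    simp
  rw [h0, zero_add]
  have h1 : ∫ ψ in (Real.arcsin (c/l))..(π/2), (max (l * Real.sin ψ - c) 0)^2
      = ∫ ψ in (Real.arcsin (c/l))..(π/2),
        (l^2 * Real.sin ψ^2 - (2*c*l) * Real.sin ψ + c^2) := by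
    apply integral_congr
    intro ψ hψ
    rw [uIcc_of_le hα2] at hψ
    have h1 : c/l ≤ Real.sin ψ := sin_ge_on hc hcl hψ.1 hψ.2
    have h2 : c ≤ l * Real.sin ψ := by
      calc c = l * (c/l) := by field_simp
        _ ≤ l * Real.sin ψ := by nlinarith
    show (max (l * Real.sin ψ - c) 0)^2 = l^2 * Real.sin ψ^2 - (2*c*l) * Real.sin ψ + c^2
    rw [max_eq_left (by linarith : (0:ℝ) ≤ l * Real.sin ψ - c)]
    ring
  rw [h1]
  have hi1 : IntervalIntegrable (fun ψ : ℝ => l^2 * Real.sin ψ^2) volume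
      (Real.arcsin (c/l)) (π/2) := (by fun_prop : Continuous _).intervalIntegrable _ _
  have hi2 : IntervalIntegrable (fun ψ : ℝ => (2*c*l) * Real.sin ψ) volume
      (Real.arcsin (c/l)) (π/2) := (by fun_prop : Continuous _).intervalIntegrable _ _
  have hi3 : IntervalIntegrable (fun ψ : ℝ => (c:ℝ)^2) volume
      (Real.arcsin (c/l)) (π/2) := intervalIntegrable_const
  rw [integral_add (hi1.sub hi2) hi3, integral_sub hi1 hi2,
    intervalIntegral.integral_const_mul, intervalIntegral.integral_const_mul, integral_sin_sq, integral_sin,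
    intervalIntegral.integral_const, hsinα, hcosα]
  simp [Real.cos_pi_div_two, Real.sin_pi_div_two, smul_eq_mul]
  field_simp
  ring
end outer

lemma sqrt_conv {l c : ℝ} (hl0 : 0 < l) (ψ : ℝ) :
    Real.sqrt ((l * Real.sin ψ)^2 - c^2) = l * Real.sqrt (Real.sin ψ^2 - (c/l)^2) := by
  rw [show (l * Real.sin ψ)^2 - c^2 = l^2 * (Real.sin ψ^2 - (c/l)^2) by field_simp,
    Real.sqrt_mul (sq_nonneg l), Real.sqrt_sq hl0.le]

lemma inner_conv {l c : ℝ} (hc : 0 < c) (hl0 : 0 < l) (ψ : ℝ) :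
    2*(l * Real.sin ψ) - 2*Real.sqrt ((l * Real.sin ψ)^2 - c^2)
      + 2*c*Real.arcsin (Real.sqrt ((l * Real.sin ψ)^2 - c^2) / (l * Real.sin ψ))
    = 2*l*Real.sin ψ - (2*l)*Real.sqrt (Real.sin ψ^2 - (c/l)^2)
      + (2*c)*Real.arcsin (Real.sqrt (Real.sin ψ^2 - (c/l)^2) / Real.sin ψ) := by
  rw [sqrt_conv hl0, mul_div_mul_left _ _ (ne_of_gt hl0)]
  ring

lemma outer_main {l c : ℝ} (hc : 0 < c) (hcl : c < l) :
    ∫ ψ in (0:ℝ)..(π/2),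
      (2*l*Real.sin ψ - (2*l)*Real.sqrt (Real.sin ψ^2 - (c/l)^2)
        + (2*c)*Real.arcsin (Real.sqrt (Real.sin ψ^2 - (c/l)^2) / Real.sin ψ))
    = 2*l - 2*l*Faux (Real.arcsin (c/l)) (π/2) (c/l)
      + 2*c*Gaux (Real.arcsin (c/l)) (π/2) (c/l) := by
  have hl0 : 0 < l := lt_trans hc hcl
  have hcont1 : Continuous fun ψ : ℝ => 2*l*Real.sin ψ := by fun_prop
  have hcont2 : Continuous fun ψ : ℝ => (2*l)*Real.sqrt (Real.sin ψ^2 - (c/l)^2) := by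
    exact continuous_const.mul (((Real.continuous_sin.pow 2).sub continuous_const).sqrt)
  rw [integral_add ((hcont1.intervalIntegrable _ _).sub (hcont2.intervalIntegrable _ _))
      ((q_integrable _ _ _).const_mul (2*c)),
    integral_sub (hcont1.intervalIntegrable _ _) (hcont2.intervalIntegrable _ _),
    intervalIntegral.integral_const_mul, intervalIntegral.integral_const_mul, mul_assoc,
    intervalIntegral.integral_const_mul, integral_sin, outer_sqrt hc hcl, outer_arcsin hc hcl]
  simp only [Real.cos_zero, Real.cos_pi_div_two]
  ring

lemma A3eq {l a : ℝ} (ha : 0 < a) (hal : a < l) :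
    A3 l a = 2*l - 2*l*Faux (Real.arcsin (a/l)) (π/2) (a/l)
      + 2*a*Gaux (Real.arcsin (a/l)) (π/2) (a/l) := by
  have hl0 : 0 < l := lt_trans ha hal
  rw [A3, ← outer_main ha hal]
  apply integral_congr
  intro ψ hψ
  rw [uIcc_of_le (by positivity : (0:ℝ) ≤ π/2)] at hψ
  have hsin : 0 ≤ Real.sin ψ := Real.sin_nonneg_of_nonneg_of_le_pi hψ.1
    (by linarith [hψ.2, Real.pi_pos])
  show (∫ φ in (0:ℝ)..π, min a (l * Real.sin ψ * |Real.cos φ|)) = _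
  rw [intA a (l * Real.sin ψ) ha (by positivity), inner_conv ha hl0]

lemma B3eq {l b : ℝ} (hb : 0 < b) (hbl : b < l) :
    B3 l b = 2*l - 2*l*Faux (Real.arcsin (b/l)) (π/2) (b/l)
      + 2*b*Gaux (Real.arcsin (b/l)) (π/2) (b/l) := by
  have hl0 : 0 < l := lt_trans hb hbl
  rw [B3, ← outer_main hb hbl]
  apply integral_congr
  intro ψ hψ
  rw [uIcc_of_le (by positivity : (0:ℝ) ≤ π/2)] at hψ
  have hsin : 0 ≤ Real.sin ψ := Real.sin_nonneg_of_nonneg_of_le_pi hψ.1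
    (by linarith [hψ.2, Real.pi_pos])
  show (∫ φ in (0:ℝ)..π, min b (l * Real.sin ψ * Real.sin φ)) = _
  rw [intB b (l * Real.sin ψ) hb (by positivity), inner_conv hb hl0]

lemma AB3eq {l a b : ℝ} (hb : 0 < b) (hba : b ≤ a) (hal : a < l)
    (hlL : l ≤ Real.sqrt (a^2 + b^2)) :
    AB3 l a b = l^2*(π/4)
      - (l^2*(π/2 - Real.arcsin (b/l))/2 - 3/2*(l*b)*Real.sqrt (1-(b/l)^2)
          + b^2*(π/2 - Real.arcsin (b/l)))
      - (l^2*(π/2 - Real.arcsin (a/l))/2 - 3/2*(l*a)*Real.sqrt (1-(a/l)^2)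
          + a^2*(π/2 - Real.arcsin (a/l))) := by
  have ha : 0 < a := lt_of_lt_of_le hb hba
  have hl0 : 0 < l := lt_trans ha hal
  have hl2 : l^2 ≤ a^2 + b^2 := (Real.le_sqrt hl0.le (by positivity)).1 hlL
  have hstep : AB3 l a b = ∫ ψ in (0:ℝ)..(π/2),
      (l^2 * Real.sin ψ^2 - (max (l * Real.sin ψ - b) 0)^2
        - (max (l * Real.sin ψ - a) 0)^2) := by
    rw [AB3]
    apply integral_congr
    intro ψ hψ
    rw [uIcc_of_le (by positivity : (0:ℝ) ≤ π/2)] at hψ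
    have hsin : 0 ≤ Real.sin ψ := Real.sin_nonneg_of_nonneg_of_le_pi hψ.1
      (by linarith [hψ.2, Real.pi_pos])
    have hsin1 : Real.sin ψ ≤ 1 := Real.sin_le_one ψ
    have hsinsq : Real.sin ψ^2 ≤ 1 := by nlinarith [Real.sin_le_one ψ]
    have hbound : (l * Real.sin ψ)^2 ≤ a^2 + b^2 := by
      nlinarith [hl2, mul_le_mul_of_nonneg_left hsinsq (sq_nonneg l)]
    show (∫ φ in (0:ℝ)..π, min a (l * Real.sin ψ * |Real.cos φ|)
        * min b (l * Real.sin ψ * Real.sin φ))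
      = l^2 * Real.sin ψ^2 - (max (l * Real.sin ψ - b) 0)^2 - (max (l * Real.sin ψ - a) 0)^2
    rw [intAB a b (l * Real.sin ψ) hb hba (by positivity) hbound]
    ring
  rw [hstep]
  have hcont1 : Continuous fun ψ : ℝ => l^2 * Real.sin ψ^2 := by fun_prop
  have hcont2 : Continuous fun ψ : ℝ => (max (l * Real.sin ψ - b) 0)^2 := by fun_prop
  have hcont3 : Continuous fun ψ : ℝ => (max (l * Real.sin ψ - a) 0)^2 := by fun_prop
  rw [integral_sub ((hcont1.intervalIntegrable _ _).sub (hcont2.intervalIntegrable _ _)) (hcont3.intervalIntegrable _ _),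
    integral_sub (hcont1.intervalIntegrable _ _) (hcont2.intervalIntegrable _ _),
    intervalIntegral.integral_const_mul, integral_sin_sq,
    outer_max hb (lt_of_le_of_lt hba hal), outer_max ha hal]
  simp only [Real.sin_pi_div_two, Real.cos_pi_div_two, Real.sin_zero, Real.cos_zero]
  ring


theorem stmt17 (l a b : ℝ) (hb : 0 < b) (hba : b ≤ a) (hal : a < l)
    (hlL : l ≤ Real.sqrt (a ^ 2 + b ^ 2)) :
    S3 l a b
      = (2 * l * b - 2 * l * b * Faux (Real.arcsin (a / l)) (π / 2) (a / l)
        + 2 * a * b * Gaux (Real.arcsin (a / l)) (π / 2) (a / l))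
      + (2 * l * a - 2 * l * a * Faux (Real.arcsin (b / l)) (π / 2) (b / l)
        + 2 * a * b * Gaux (Real.arcsin (b / l)) (π / 2) (b / l))
      - (l ^ 2 / 2 * Real.arcsin (a / l)
        + 3 / 2 * (l * a) * Real.sqrt (1 - a ^ 2 / l ^ 2)
        - a ^ 2 * (π / 2 - Real.arcsin (a / l)))
      - (l ^ 2 / 2 * Real.arcsin (b / l)
        + 3 / 2 * (l * b) * Real.sqrt (1 - b ^ 2 / l ^ 2)
        - b ^ 2 * (π / 2 - Real.arcsin (b / l)))
      + π / 4 * l ^ 2 := by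
  have ha : 0 < a := lt_of_lt_of_le hb hba
  have hbl : b < l := lt_of_le_of_lt hba hal
  have hsa : Real.sqrt (1 - a^2/l^2) = Real.sqrt (1 - (a/l)^2) := by rw [div_pow]
  have hsb : Real.sqrt (1 - b^2/l^2) = Real.sqrt (1 - (b/l)^2) := by rw [div_pow]
  rw [S3, A3eq ha hal, B3eq hb hbl, AB3eq hb hba hal hlL, hsa, hsb]
  ring
end

section
/- For fixed real numbers a, b with 0 < b ≤ a, the quantity S³ᴰ(l,a,b) tends to a·b·π²/2 as l → ∞; equivalently, the 3D needle intersection probability P³ᴰ(l,a,b) = S³ᴰ(l,a,b)/(a·b·π²/2) tends to 1 as l → ∞ (while remaining strictly below 1 for every finite l > 0). -/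
open Real MeasureTheory Filter

namespace Stmt19Aux
open Topology

noncomputable def uu (a l ψ φ : ℝ) : ℝ := min a (l * Real.sin ψ * |Real.cos φ|)
noncomputable def vv (b l ψ φ : ℝ) : ℝ := min b (l * Real.sin ψ * Real.sin φ)
noncomputable def fI (a b l ψ φ : ℝ) : ℝ := (a - uu a l ψ φ) * (b - vv b l ψ φ)
noncomputable def gI (a b l ψ : ℝ) : ℝ := ∫ φ in (0:ℝ)..π, fI a b l ψ φ
noncomputable def RI (a b l : ℝ) : ℝ := ∫ ψ in (0:ℝ)..(π/2), gI a b l ψ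

lemma cont_uu (a l : ℝ) : Continuous (Function.uncurry (uu a l)) := by
  unfold uu Function.uncurry
  exact continuous_const.min (by fun_prop)

lemma cont_vv (b l : ℝ) : Continuous (Function.uncurry (vv b l)) := by
  unfold vv Function.uncurry
  exact continuous_const.min (by fun_prop)

lemma cont_fI (a b l : ℝ) : Continuous (Function.uncurry (fI a b l)) := by
  have h1 := cont_uu a l
  have h2 := cont_vv b l
  unfold fI Function.uncurry at *
  exact ((continuous_const.sub h1).mul (continuous_const.sub h2))

lemma cont_gI (a b l : ℝ) : Continuous (gI a b l) :=
  intervalIntegral.continuous_parametric_intervalIntegral_of_continuous' (cont_fI a b l) 0 π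

lemma S3_eq (a b l : ℝ) : S3 l a b = a * b * π ^ 2 / 2 - RI a b l := by
  have huc := cont_uu a l
  have hvc := cont_vv b l
  -- inner integrands continuous in φ for fixed ψ
  have hucψ : ∀ ψ, Continuous fun φ => uu a l ψ φ := by
    intro ψ; unfold uu; exact continuous_const.min (by fun_prop)
  have hvcψ : ∀ ψ, Continuous fun φ => vv b l ψ φ := by
    intro ψ; unfold vv; exact continuous_const.min (by fun_prop)
  have hfcψ : ∀ ψ, Continuous fun φ => fI a b l ψ φ := by
    intro ψ; unfold fI
    exact (continuous_const.sub (hucψ ψ)).mul (continuous_const.sub (hvcψ ψ))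
  have key : ∀ ψ : ℝ,
      b * (∫ φ in (0:ℝ)..π, uu a l ψ φ) + a * (∫ φ in (0:ℝ)..π, vv b l ψ φ)
        - (∫ φ in (0:ℝ)..π, uu a l ψ φ * vv b l ψ φ)
      = a * b * π - gI a b l ψ := by
    intro ψ
    rw [← intervalIntegral.integral_const_mul, ← intervalIntegral.integral_const_mul,
      ← intervalIntegral.integral_add (f := fun φ => b * uu a l ψ φ) (g := fun φ => a * vv b l ψ φ)
        ((continuous_const.mul (hucψ ψ)).intervalIntegrable 0 π)
        ((continuous_const.mul (hvcψ ψ)).intervalIntegrable 0 π),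
      ← intervalIntegral.integral_sub
        (f := fun φ => b * uu a l ψ φ + a * vv b l ψ φ) (g := fun φ => uu a l ψ φ * vv b l ψ φ)
        (((continuous_const.mul (hucψ ψ)).add
          (continuous_const.mul (hvcψ ψ))).intervalIntegrable 0 π)
        (((hucψ ψ).mul (hvcψ ψ)).intervalIntegrable 0 π)]
    have : (fun φ => b * uu a l ψ φ + a * vv b l ψ φ - uu a l ψ φ * vv b l ψ φ)
        = fun φ => a * b - fI a b l ψ φ := by
      funext φ; unfold fI; ring
    rw [intervalIntegral.integral_congr (fun φ _ => congrFun this φ),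
      intervalIntegral.integral_sub (intervalIntegrable_const)
        ((hfcψ ψ).intervalIntegrable 0 π)]
    rw [intervalIntegral.integral_const, smul_eq_mul]
    unfold gI; ring
  -- outer assembly
  have hA : A3 l a = ∫ ψ in (0:ℝ)..(π/2), ∫ φ in (0:ℝ)..π, uu a l ψ φ := rfl
  have hB : B3 l b = ∫ ψ in (0:ℝ)..(π/2), ∫ φ in (0:ℝ)..π, vv b l ψ φ := rfl
  have hAB : AB3 l a b
      = ∫ ψ in (0:ℝ)..(π/2), ∫ φ in (0:ℝ)..π, uu a l ψ φ * vv b l ψ φ := rfl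
  have hwc : Continuous (Function.uncurry fun ψ φ => uu a l ψ φ * vv b l ψ φ) :=
    huc.mul hvc
  have hAc : Continuous fun ψ => ∫ φ in (0:ℝ)..π, uu a l ψ φ :=
    intervalIntegral.continuous_parametric_intervalIntegral_of_continuous' huc 0 π
  have hBc : Continuous fun ψ => ∫ φ in (0:ℝ)..π, vv b l ψ φ :=
    intervalIntegral.continuous_parametric_intervalIntegral_of_continuous' hvc 0 π
  have hABc : Continuous fun ψ => ∫ φ in (0:ℝ)..π, uu a l ψ φ * vv b l ψ φ :=
    intervalIntegral.continuous_parametric_intervalIntegral_of_continuous' hwc 0 π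
  calc S3 l a b
      = ∫ ψ in (0:ℝ)..(π/2),
          (b * (∫ φ in (0:ℝ)..π, uu a l ψ φ) + a * (∫ φ in (0:ℝ)..π, vv b l ψ φ)
            - ∫ φ in (0:ℝ)..π, uu a l ψ φ * vv b l ψ φ) := by
        unfold S3
        rw [hA, hB, hAB, ← intervalIntegral.integral_const_mul,
          ← intervalIntegral.integral_const_mul,
          ← intervalIntegral.integral_add (f := fun ψ => b * ∫ φ in (0:ℝ)..π, uu a l ψ φ)
            (g := fun ψ => a * ∫ φ in (0:ℝ)..π, vv b l ψ φ)
            ((continuous_const.mul hAc).intervalIntegrable 0 (π/2))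
            ((continuous_const.mul hBc).intervalIntegrable 0 (π/2)),
          ← intervalIntegral.integral_sub
            (f := fun ψ => b * (∫ φ in (0:ℝ)..π, uu a l ψ φ) + a * ∫ φ in (0:ℝ)..π, vv b l ψ φ)
            (g := fun ψ => ∫ φ in (0:ℝ)..π, uu a l ψ φ * vv b l ψ φ)
            (((continuous_const.mul hAc).add (continuous_const.mul hBc)).intervalIntegrable 0 (π/2))
            (hABc.intervalIntegrable 0 (π/2))]
    _ = ∫ ψ in (0:ℝ)..(π/2), (a * b * π - gI a b l ψ) :=
        intervalIntegral.integral_congr fun ψ _ => key ψ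
    _ = a * b * π ^ 2 / 2 - RI a b l := by
        rw [intervalIntegral.integral_sub intervalIntegrable_const
            ((cont_gI a b l).intervalIntegrable 0 (π/2)),
          intervalIntegral.integral_const, smul_eq_mul]
        unfold RI; ring


lemma fI_nonneg (a b l ψ φ : ℝ) : 0 ≤ fI a b l ψ φ :=
  mul_nonneg (sub_nonneg.2 (min_le_left _ _)) (sub_nonneg.2 (min_le_left _ _))

lemma gI_nonneg (a b l ψ : ℝ) : 0 ≤ gI a b l ψ :=
  intervalIntegral.integral_nonneg (le_of_lt pi_pos) (fun φ _ => fI_nonneg a b l ψ φ)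

lemma fI_bound {a b l ψ φ : ℝ} (ha : 0 ≤ a) (hbb : 0 ≤ b) (hl : 0 ≤ l)
    (hψ : 0 ≤ Real.sin ψ) (hφ : 0 ≤ Real.sin φ) : ‖fI a b l ψ φ‖ ≤ a * b := by
  have h1 : 0 ≤ uu a l ψ φ := le_min ha (by positivity)
  have h3 : 0 ≤ vv b l ψ φ := le_min hbb (by positivity)
  have h2 : uu a l ψ φ ≤ a := min_le_left _ _
  have h4 : vv b l ψ φ ≤ b := min_le_left _ _
  rw [Real.norm_eq_abs, abs_of_nonneg (fI_nonneg a b l ψ φ)]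
  unfold fI
  nlinarith

lemma tendsto_gI {a b : ℝ} (ha : 0 < a) (hbb : 0 < b) {ψ : ℝ} (hψ : 0 < Real.sin ψ) :
    Tendsto (fun l => gI a b l ψ) atTop (𝓝 0) := by
  have hψ' : 0 ≤ Real.sin ψ := hψ.le
  have h0 : (0:ℝ) = ∫ φ in (0:ℝ)..π, (0:ℝ) := by simp
  rw [h0]
  apply intervalIntegral.tendsto_integral_filter_of_dominated_convergence (fun _ => a * b)
  · filter_upwards with l
    exact (Continuous.aestronglyMeasurable (by
      unfold fI uu vv
      exact (continuous_const.sub (continuous_const.min (by fun_prop))).mul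
        (continuous_const.sub (continuous_const.min (by fun_prop))))).restrict
  · filter_upwards [eventually_ge_atTop (0:ℝ)] with l hl
    filter_upwards with φ hφ
    have hφ' : 0 ≤ Real.sin φ := by
      rw [Set.uIoc_of_le (le_of_lt pi_pos)] at hφ
      exact Real.sin_nonneg_of_nonneg_of_le_pi hφ.1.le hφ.2
    exact fI_bound ha.le hbb.le hl hψ' hφ'
  · exact intervalIntegrable_const
  · have hne : ∀ᵐ φ : ℝ, φ ≠ π := by
      rw [ae_iff]
      simp only [ne_eq, not_not, Set.setOf_eq_eq_singleton]
      exact measure_singleton π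
    filter_upwards [hne] with φ hφne hφ
    rw [Set.uIoc_of_le (le_of_lt pi_pos)] at hφ
    have hsφ : 0 < Real.sin φ :=
      Real.sin_pos_of_pos_of_lt_pi hφ.1 (lt_of_le_of_ne hφ.2 hφne)
    have hcm : 0 < Real.sin ψ * Real.sin φ := mul_pos hψ hsφ
    have htend : Tendsto (fun l : ℝ => l * Real.sin ψ * Real.sin φ) atTop atTop := by
      simp only [mul_assoc]
      exact Tendsto.atTop_mul_const hcm tendsto_id
    have hev : ∀ᶠ l in atTop, fI a b l ψ φ = 0 := by
      filter_upwards [htend.eventually_ge_atTop b] with l hl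
      unfold fI vv
      rw [min_eq_left hl]
      ring
    exact Tendsto.congr' (by filter_upwards [hev] with l hl; exact hl.symm) tendsto_const_nhds

lemma tendsto_RI {a b : ℝ} (ha : 0 < a) (hbb : 0 < b) :
    Tendsto (fun l => RI a b l) atTop (𝓝 0) := by
  have h0 : (0:ℝ) = ∫ ψ in (0:ℝ)..(π/2), (0:ℝ) := by simp
  rw [h0]
  apply intervalIntegral.tendsto_integral_filter_of_dominated_convergence (fun _ => a * b * π)
  · filter_upwards with l
    exact ((cont_gI a b l).aestronglyMeasurable).restrict
  · filter_upwards [eventually_ge_atTop (0:ℝ)] with l hl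
    filter_upwards with ψ hψ
    rw [Set.uIoc_of_le (by positivity : (0:ℝ) ≤ π/2)] at hψ
    have hψ' : 0 ≤ Real.sin ψ :=
      Real.sin_nonneg_of_nonneg_of_le_pi hψ.1.le (le_trans hψ.2 (by linarith [pi_pos]))
    have : ‖gI a b l ψ‖ ≤ a * b * |π - 0| := by
      apply intervalIntegral.norm_integral_le_of_norm_le_const
      intro φ hφ
      rw [Set.uIoc_of_le (le_of_lt pi_pos)] at hφ
      exact fI_bound ha.le hbb.le hl hψ' (Real.sin_nonneg_of_nonneg_of_le_pi hφ.1.le hφ.2)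
    calc ‖gI a b l ψ‖ ≤ a * b * |π - 0| := this
      _ = a * b * π := by rw [sub_zero, abs_of_pos pi_pos]
  · exact intervalIntegrable_const
  · filter_upwards with ψ hψ
    rw [Set.uIoc_of_le (by positivity : (0:ℝ) ≤ π/2)] at hψ
    have hψpos : 0 < Real.sin ψ :=
      Real.sin_pos_of_pos_of_lt_pi hψ.1 (lt_of_le_of_lt hψ.2 (by linarith [pi_pos]))
    exact tendsto_gI ha hbb hψpos

lemma RI_pos {a b l : ℝ} (ha : 0 < a) (hbb : 0 < b) (hba : b ≤ a) (hl : 0 < l) :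
    0 < RI a b l := by
  set ψ₀ : ℝ := min (π/2) (b / (2*l)) with hψ₀def
  have hψ₀pos : 0 < ψ₀ := lt_min (by positivity) (by positivity)
  have hψ₀le : ψ₀ ≤ π/2 := min_le_left _ _
  have hgpos : ∀ ψ ∈ Set.Ioo 0 ψ₀, 0 < gI a b l ψ := by
    intro ψ hψ
    have hsψ : 0 < Real.sin ψ := Real.sin_pos_of_pos_of_lt_pi hψ.1
      (lt_of_lt_of_le hψ.2 (le_trans hψ₀le (by linarith [pi_pos])))
    have hlt : l * Real.sin ψ < b := by
      have h1 : Real.sin ψ < ψ := Real.sin_lt hψ.1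
      have h2 : ψ < b / (2*l) := lt_of_lt_of_le hψ.2 (min_le_right _ _)
      have : l * Real.sin ψ < l * (b / (2*l)) := by
        apply mul_lt_mul_of_pos_left (lt_trans h1 h2) hl
      calc l * Real.sin ψ < l * (b / (2*l)) := this
        _ = b / 2 := by field_simp
        _ < b := by linarith
    have hfpos : ∀ φ ∈ Set.Ioo (0:ℝ) π, 0 < fI a b l ψ φ := by
      intro φ _
      have hu : uu a l ψ φ < a := by
        have : l * Real.sin ψ * |Real.cos φ| ≤ l * Real.sin ψ * 1 := by
          apply mul_le_mul_of_nonneg_left (abs_cos_le_one φ) (by positivity)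
        calc uu a l ψ φ ≤ l * Real.sin ψ * |Real.cos φ| := min_le_right _ _
          _ ≤ l * Real.sin ψ := by linarith
          _ < b := hlt
          _ ≤ a := hba
      have hv : vv b l ψ φ < b := by
        have : l * Real.sin ψ * Real.sin φ ≤ l * Real.sin ψ * 1 := by
          apply mul_le_mul_of_nonneg_left (Real.sin_le_one φ) (by positivity)
        calc vv b l ψ φ ≤ l * Real.sin ψ * Real.sin φ := min_le_right _ _
          _ ≤ l * Real.sin ψ := by linarith
          _ < b := hlt
      exact mul_pos (by linarith) (by linarith)
    have hfc : Continuous fun φ => fI a b l ψ φ := by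
      unfold fI uu vv
      exact (continuous_const.sub (continuous_const.min (by fun_prop))).mul
        (continuous_const.sub (continuous_const.min (by fun_prop)))
    exact intervalIntegral.intervalIntegral_pos_of_pos_on
      (hfc.intervalIntegrable 0 π) hfpos pi_pos
  have hsplit : RI a b l
      = (∫ ψ in (0:ℝ)..ψ₀, gI a b l ψ) + ∫ ψ in ψ₀..(π/2), gI a b l ψ := by
    unfold RI
    rw [intervalIntegral.integral_add_adjacent_intervals
      ((cont_gI a b l).intervalIntegrable 0 ψ₀)
      ((cont_gI a b l).intervalIntegrable ψ₀ (π/2))]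
  rw [hsplit]
  have h1 : 0 < ∫ ψ in (0:ℝ)..ψ₀, gI a b l ψ :=
    intervalIntegral.intervalIntegral_pos_of_pos_on
      ((cont_gI a b l).intervalIntegrable 0 ψ₀) hgpos hψ₀pos
  have h2 : 0 ≤ ∫ ψ in ψ₀..(π/2), gI a b l ψ :=
    intervalIntegral.integral_nonneg hψ₀le (fun ψ _ => gI_nonneg a b l ψ)
  linarith

end Stmt19Aux

theorem stmt19 (a b : ℝ) (hb : 0 < b) (hba : b ≤ a) :
    Filter.Tendsto (fun l : ℝ => S3 l a b) Filter.atTop (nhds (a * b * π ^ 2 / 2))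
      ∧ Filter.Tendsto (fun l : ℝ => S3 l a b / (a * b * π ^ 2 / 2))
          Filter.atTop (nhds 1)
      ∧ ∀ l : ℝ, 0 < l → S3 l a b / (a * b * π ^ 2 / 2) < 1 := by
  have ha : 0 < a := lt_of_lt_of_le hb hba
  have hc : 0 < a * b * π ^ 2 / 2 := by positivity
  have hS : ∀ l : ℝ, S3 l a b = a * b * π ^ 2 / 2 - Stmt19Aux.RI a b l :=
    fun l => Stmt19Aux.S3_eq a b l
  have hR := Stmt19Aux.tendsto_RI ha hb
  have T1 : Filter.Tendsto (fun l : ℝ => S3 l a b) Filter.atTop (nhds (a * b * π ^ 2 / 2)) := by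
    have h := (tendsto_const_nhds (x := a * b * π ^ 2 / 2) (f := Filter.atTop (α := ℝ))).sub hR
    rw [sub_zero] at h
    exact h.congr fun l => (hS l).symm
  refine ⟨T1, ?_, ?_⟩
  · have h := T1.div_const (a * b * π ^ 2 / 2)
    rwa [div_self hc.ne'] at h
  · intro l hl
    rw [div_lt_one hc, hS l]
    linarith [Stmt19Aux.RI_pos ha hb hba hl]
end
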